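/- arXiv:2110.00467 — 6 statements merged into one kernel-verified Lean document; each statement's English description precedes it below -/
import Mathlib

section
/- Let μ_0 be a Borel probability measure on a closed interval I ⊆ R with continuous cdf F_{μ_0}. For μ in the Wasserstein space W_2(I), define log_{μ_0}(μ) = F_μ^{-1} ∘ F_{μ_0} - id, regarded as an element of L²(μ_0). Then the map log_{μ_0} : W_2(I) → L²(μ_0) is an isometry: for all μ_1, μ_2 ∈ W_2(I), ‖log_{μ_0}(μ_1) - log_{μ_0}(μ_2)‖_{L²(μ_0)} = d_W(μ_1, μ_2). In particular, log_{μ_0} is a continuous injection into a separable Hilbert space. -/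
open MeasureTheory ProbabilityTheory

/-- The quantile function (generalized inverse cdf) of a probability measure on `ℝ`. -/
noncomputable def quantileFn (μ : Measure ℝ) (s : ℝ) : ℝ :=
  sInf {t : ℝ | s ≤ ProbabilityTheory.cdf μ t}

/-- The log map at `μ₀`: `log_{μ₀}(μ) = F_μ⁻¹ ∘ F_{μ₀} - id`, as a function on `ℝ`
(regarded as an element of `L²(μ₀)`). -/
noncomputable def wassersteinLog (μ₀ μ : Measure ℝ) (t : ℝ) : ℝ :=
  quantileFn μ (ProbabilityTheory.cdf μ₀ t) - t

open Set Filter Topology in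
/-- The quantile function is monotone on `(0,1)`. -/
lemma quantileFn_monotoneOn (μ : Measure ℝ) : MonotoneOn (quantileFn μ) (Set.Ioo 0 1) := by
  intro s hs s' hs' hss'
  have hsub : {t : ℝ | s' ≤ cdf μ t} ⊆ {t : ℝ | s ≤ cdf μ t} :=
    fun t ht => le_trans hss' ht
  have hne : {t : ℝ | s' ≤ cdf μ t}.Nonempty := by
    obtain ⟨x, hx⟩ := ((tendsto_cdf_atTop μ).eventually (eventually_gt_nhds hs'.2)).exists
    exact ⟨x, hx.le⟩
  have hbdd : BddBelow {t : ℝ | s ≤ cdf μ t} := by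
    obtain ⟨x, hx⟩ := ((tendsto_cdf_atBot μ).eventually (eventually_lt_nhds hs.1)).exists
    refine ⟨x, fun t ht => ?_⟩
    by_contra h
    push_neg at h
    exact absurd (le_trans ht (monotone_cdf μ h.le)) (not_le.2 hx)
  exact csInf_le_csInf hbdd hne hsub

open Set Filter Topology in
/-- Probability integral transform: if the cdf of a probability measure `μ₀` is continuous,
then `cdf μ₀` pushes `μ₀` forward to the uniform measure on `(0,1)`. -/
lemma map_cdf_eq_uniform (μ₀ : Measure ℝ) [IsProbabilityMeasure μ₀]
    (hc₀ : Continuous (ProbabilityTheory.cdf μ₀)) :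
    μ₀.map (ProbabilityTheory.cdf μ₀) = volume.restrict (Set.Ioo (0 : ℝ) 1) := by
  have hmeas : Measurable (cdf μ₀ : ℝ → ℝ) := hc₀.measurable
  haveI : IsProbabilityMeasure (μ₀.map (cdf μ₀)) :=
    MeasureTheory.Measure.isProbabilityMeasure_map hmeas.aemeasurable
  haveI : IsFiniteMeasure (volume.restrict (Set.Ioo (0 : ℝ) 1)) := by
    constructor
    rw [Measure.restrict_apply_univ, Real.volume_Ioo]
    norm_num
  -- no atoms
  have hatom : ∀ c : ℝ, μ₀ {c} = 0 := by
    intro c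
    have h1 : Function.leftLim (cdf μ₀ : ℝ → ℝ) c = cdf μ₀ c :=
      leftLim_eq_of_tendsto
        ((hc₀.tendsto c).mono_left nhdsWithin_le_nhds)
    conv_lhs => rw [← measure_cdf μ₀]
    rw [StieltjesFunction.measure_singleton, h1, sub_self, ENNReal.ofReal_zero]
  refine MeasureTheory.Measure.ext_of_Iic _ _ (fun u => ?_)
  rw [Measure.map_apply hmeas measurableSet_Iic, Measure.restrict_apply measurableSet_Iic]
  rcases lt_or_ge u 0 with hu0 | hu0
  · have h1 : cdf μ₀ ⁻¹' Iic u = ∅ := by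
      ext x; simp only [mem_preimage, mem_Iic, mem_empty_iff_false, iff_false, not_le]
      exact lt_of_lt_of_le hu0 (cdf_nonneg μ₀ x)
    have h2 : Iic u ∩ Ioo (0:ℝ) 1 = ∅ := by
      ext x; simp only [mem_inter_iff, mem_Iic, mem_Ioo, mem_empty_iff_false, iff_false]
      rintro ⟨hxu, hx0, -⟩
      exact absurd (le_trans hxu hu0.le) (not_le.2 hx0)
    simp [h1, h2]
  rcases le_or_gt 1 u with hu1 | hu1
  · have h1 : cdf μ₀ ⁻¹' Iic u = univ := by
      ext x; simp only [mem_preimage, mem_Iic, mem_univ, iff_true]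
      exact le_trans (cdf_le_one μ₀ x) hu1
    have h2 : Iic u ∩ Ioo (0:ℝ) 1 = Ioo (0:ℝ) 1 := by
      refine inter_eq_self_of_subset_right (fun x hx => ?_)
      exact le_trans hx.2.le hu1
    rw [h1, h2, Real.volume_Ioo]
    simp
  · -- 0 ≤ u < 1
    have h2 : Iic u ∩ Ioo (0:ℝ) 1 = Ioc 0 u := by
      ext x
      simp only [mem_inter_iff, mem_Iic, mem_Ioo, mem_Ioc]
      constructor
      · rintro ⟨hxu, hx0, -⟩; exact ⟨hx0, hxu⟩
      · rintro ⟨hx0, hxu⟩; exact ⟨hxu, hx0, lt_of_le_of_lt hxu hu1⟩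
    rw [h2, Real.volume_Ioc, sub_zero]
    set S := cdf μ₀ ⁻¹' Iic u with hS
    rcases S.eq_empty_or_nonempty with hSe | hSne
    · -- S empty forces u = 0 is impossible for u > 0; here u could be 0
      have hu0' : u = 0 := by
        by_contra h
        have hu0'' : 0 < u := lt_of_le_of_ne hu0 (Ne.symm h)
        obtain ⟨x, hx⟩ := ((tendsto_cdf_atBot μ₀).eventually (eventually_lt_nhds hu0'')).exists
        exact absurd (mem_preimage.2 (mem_Iic.2 hx.le)) (by rw [← hS]; simp [hSe])
      simp [hSe, hu0']
    · -- S nonempty: S = Iic c with cdf c = u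
      have hSbdd : BddAbove S := by
        obtain ⟨x, hx⟩ := ((tendsto_cdf_atTop μ₀).eventually (eventually_gt_nhds hu1)).exists
        refine ⟨x, fun t ht => ?_⟩
        by_contra h
        push_neg at h
        exact absurd (le_trans (monotone_cdf μ₀ h.le) ht) (not_le.2 hx)
      set c := sSup S with hc
      have hcS : c ∈ S := by
        have hclosed : IsClosed S := IsClosed.preimage hc₀ isClosed_Iic
        exact hclosed.closure_subset (csSup_mem_closure hSne hSbdd)
      have hcle : cdf μ₀ c ≤ u := hcS
      have hcge : u ≤ cdf μ₀ c := by
        have htend : Tendsto (cdf μ₀ : ℝ → ℝ) (𝓝[>] c) (𝓝 (cdf μ₀ c)) :=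
          (hc₀.tendsto c).mono_left nhdsWithin_le_nhds
        refine ge_of_tendsto htend (eventually_nhdsWithin_of_forall (fun x hx => ?_))
        by_contra h
        push_neg at h
        exact absurd (le_csSup hSbdd (mem_preimage.2 (mem_Iic.2 h.le))) (not_le.2 hx)
      have hcu : cdf μ₀ c = u := le_antisymm hcle hcge
      have hSIic : S = Iic c := by
        ext x
        constructor
        · intro hx; exact le_csSup hSbdd hx
        · intro hx
          exact mem_preimage.2 (mem_Iic.2 (le_trans (monotone_cdf μ₀ hx) hcle))
      rw [hSIic, ← ofReal_cdf μ₀ c, hcu]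

/-- the log map on Wasserstein space is an isometry into `L²(μ₀)`.
Let `μ₀` be a Borel probability measure on the closed interval `I = [a,b]` with
continuous cdf, and let `μ₁, μ₂` be members of the Wasserstein space `W₂(I)`
(probability measures supported on `I` with finite second moment). Then
`‖log_{μ₀}(μ₁) - log_{μ₀}(μ₂)‖_{L²(μ₀)} = d_W(μ₁, μ₂)`, where
`d_W(μ₁,μ₂) = (∫_0^1 (F_{μ₁}⁻¹(s) - F_{μ₂}⁻¹(s))² ds)^{1/2}`. -/
theorem wassersteinLog_isometry
    (a b : ℝ) (hab : a ≤ b)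
    (μ₀ μ₁ μ₂ : Measure ℝ)
    [IsProbabilityMeasure μ₀] [IsProbabilityMeasure μ₁] [IsProbabilityMeasure μ₂]
    (hsupp₀ : μ₀ (Set.Icc a b)ᶜ = 0) (hsupp₁ : μ₁ (Set.Icc a b)ᶜ = 0)
    (hsupp₂ : μ₂ (Set.Icc a b)ᶜ = 0)
    (hm₀ : MeasureTheory.MemLp id 2 μ₀) (hm₁ : MeasureTheory.MemLp id 2 μ₁)
    (hm₂ : MeasureTheory.MemLp id 2 μ₂)
    (hc₀ : Continuous (ProbabilityTheory.cdf μ₀)) :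
    Real.sqrt (∫ t, (wassersteinLog μ₀ μ₁ t - wassersteinLog μ₀ μ₂ t) ^ 2 ∂μ₀)
      = Real.sqrt (∫ s in Set.Ioo (0 : ℝ) 1, (quantileFn μ₁ s - quantileFn μ₂ s) ^ 2) := by
  congr 1
  have hlog : ∀ t, wassersteinLog μ₀ μ₁ t - wassersteinLog μ₀ μ₂ t
      = quantileFn μ₁ (cdf μ₀ t) - quantileFn μ₂ (cdf μ₀ t) := by
    intro t; simp only [wassersteinLog]; ring
  simp only [hlog]
  have hmap := map_cdf_eq_uniform μ₀ hc₀
  have hg : AEStronglyMeasurable (fun s => (quantileFn μ₁ s - quantileFn μ₂ s) ^ 2)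
      (μ₀.map (cdf μ₀)) := by
    rw [hmap]
    have h1 : AEMeasurable (quantileFn μ₁) (volume.restrict (Set.Ioo (0:ℝ) 1)) :=
      aemeasurable_restrict_of_monotoneOn measurableSet_Ioo (quantileFn_monotoneOn μ₁)
    have h2 : AEMeasurable (quantileFn μ₂) (volume.restrict (Set.Ioo (0:ℝ) 1)) :=
      aemeasurable_restrict_of_monotoneOn measurableSet_Ioo (quantileFn_monotoneOn μ₂)
    exact ((h1.sub h2).pow_const 2).aestronglyMeasurable
  rw [← MeasureTheory.integral_map hc₀.measurable.aemeasurable hg, hmap]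
end

section
/- Let I be a compact interval and K ⊆ W_2(I) a compact subset of the Wasserstein space. For any γ > 0, the Gaussian-type kernel κ_G(μ, ν) = exp(-γ d_W(μ, ν)²) and the Laplacian-type kernel κ_L(μ, ν) = exp(-γ d_W(μ, ν)) are positive definite kernels on K. -/
open MeasureTheory ProbabilityTheory

/-- The quadratic Wasserstein distance between one-dimensional probability measures. -/
noncomputable def wassersteinDist (μ ν : Measure ℝ) : ℝ :=
  Real.sqrt (∫ s in Set.Ioo (0 : ℝ) 1, (quantileFn μ s - quantileFn ν s) ^ 2)

open Finset Set



/-- quadratic-form nonnegativity predicate -/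
def QFnn {m : ℕ} (A : Fin m → Fin m → ℝ) : Prop :=
  ∀ c : Fin m → ℝ, 0 ≤ ∑ i, ∑ j, c i * c j * A i j

lemma posSemidef_of_qfnn {m : ℕ} {A : Fin m → Fin m → ℝ}
    (hs : ∀ i j, A i j = A j i) (h : QFnn A) : (Matrix.of A).PosSemidef := by
  rw [Matrix.posSemidef_iff_dotProduct_mulVec]
  constructor
  · ext i j
    simp [Matrix.conjTranspose, Matrix.IsHermitian, hs i j]
  · intro x
    have := h x
    simp only [dotProduct, Matrix.mulVec, Matrix.of_apply, Pi.star_apply, star_trivial,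
      dotProduct]
    calc (0:ℝ) ≤ ∑ i, ∑ j, x i * x j * A i j := h x
    _ = ∑ i, x i * ∑ j, A i j * x j := by
        rw [Finset.sum_congr rfl]
        intro i _
        rw [Finset.mul_sum]
        exact Finset.sum_congr rfl fun j _ => by ring

lemma qfnn_schur {m : ℕ} {A B : Fin m → Fin m → ℝ} (hA : QFnn A)
    (hBs : ∀ i j, B i j = B j i) (hB : QFnn B) :
    QFnn (fun i j => A i j * B i j) := by
  intro c
  obtain ⟨N, hN⟩ := (by open scoped MatrixOrder in exact CStarAlgebra.nonneg_iff_eq_star_mul_self.mp (posSemidef_of_qfnn hBs hB).nonneg)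
  have hBentry : ∀ i j, B i j = ∑ k, N k i * N k j := by
    intro i j
    have := congrFun (congrFun hN i) j
    simpa [Matrix.mul_apply, Matrix.conjTranspose_apply] using this
  calc (0:ℝ) ≤ ∑ k, ∑ i, ∑ j, (c i * N k i) * (c j * N k j) * A i j :=
        Finset.sum_nonneg fun k _ => hA fun i => c i * N k i
  _ = ∑ i, ∑ j, c i * c j * (A i j * B i j) := by
      rw [Finset.sum_comm]
      refine Finset.sum_congr rfl fun i _ => ?_
      rw [Finset.sum_comm]
      refine Finset.sum_congr rfl fun j _ => ?_
      rw [hBentry i j, Finset.mul_sum, Finset.mul_sum]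
      exact Finset.sum_congr rfl fun k _ => by ring

lemma qfnn_pow {m : ℕ} {A : Fin m → Fin m → ℝ} (hs : ∀ i j, A i j = A j i) (hA : QFnn A) :
    ∀ n : ℕ, QFnn (fun i j => A i j ^ n) := by
  intro n
  induction n with
  | zero =>
    intro c
    simp only [pow_zero, mul_one]
    rw [← Finset.sum_mul_sum]
    exact mul_self_nonneg _
  | succ n ih =>
    have := qfnn_schur ih hs hA
    intro c
    have h2 := this c
    simpa [pow_succ] using h2

lemma qfnn_exp {m : ℕ} {A : Fin m → Fin m → ℝ} (hs : ∀ i j, A i j = A j i) (hA : QFnn A) :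
    QFnn (fun i j => Real.exp (A i j)) := by
  intro c
  have hexp : ∀ x : ℝ, Real.exp x = ∑' n : ℕ, x ^ n / (Nat.factorial n : ℝ) := by
    intro x
    rw [Real.exp_eq_exp_ℝ, NormedSpace.exp_eq_tsum_div]
  have hsum : ∀ i j : Fin m, Summable (fun n : ℕ => c i * c j * (A i j ^ n / (Nat.factorial n : ℝ))) :=
    fun i j => (Real.summable_pow_div_factorial (A i j)).mul_left _
  calc (0:ℝ) ≤ ∑' n : ℕ, ∑ i, ∑ j, c i * c j * (A i j ^ n / (Nat.factorial n : ℝ)) := by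
        refine tsum_nonneg fun n => ?_
        have h1 : ∑ i, ∑ j, c i * c j * (A i j ^ n / (Nat.factorial n : ℝ))
            = (∑ i, ∑ j, c i * c j * A i j ^ n) / (Nat.factorial n : ℝ) := by
          rw [Finset.sum_div]
          refine Finset.sum_congr rfl fun i _ => ?_
          rw [Finset.sum_div]
          exact Finset.sum_congr rfl fun j _ => by ring
        rw [h1]
        exact div_nonneg (qfnn_pow hs hA n c) (by positivity)
  _ = ∑ i, ∑ j, c i * c j * Real.exp (A i j) := by
      rw [Summable.tsum_finsetSum (fun i _ => summable_sum fun j _ => hsum i j)]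
      refine Finset.sum_congr rfl fun i _ => ?_
      rw [Summable.tsum_finsetSum (fun j _ => hsum i j)]
      refine Finset.sum_congr rfl fun j _ => ?_
      rw [hexp (A i j), ← tsum_mul_left]
section
variable {E : Type*} [NormedAddCommGroup E] [InnerProductSpace ℝ E]

lemma qfnn_gram {m : ℕ} (v : Fin m → E) : QFnn (fun i j => (inner ℝ (v i) (v j) : ℝ)) := by
  intro c
  have h : ∑ i, ∑ j, c i * c j * (inner ℝ (v i) (v j) : ℝ)
      = (inner ℝ (∑ i, c i • v i) (∑ j, c j • v j) : ℝ) := by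
    rw [sum_inner]
    refine (Finset.sum_congr rfl fun i _ => ?_).symm
    rw [inner_sum]
    refine Finset.sum_congr rfl fun j _ => ?_
    rw [real_inner_smul_left, real_inner_smul_right]
    ring
  rw [h]
  exact real_inner_self_nonneg

lemma gaussPD {m : ℕ} (v : Fin m → E) {γ : ℝ} (hγ : 0 ≤ γ) (c : Fin m → ℝ) :
    0 ≤ ∑ i, ∑ j, c i * c j * Real.exp (-γ * ‖v i - v j‖ ^ 2) := by
  have hA : QFnn (fun i j => 2 * γ * (inner ℝ (v i) (v j) : ℝ)) := by
    intro d
    have h := qfnn_gram v d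
    have heq : ∑ i, ∑ j, d i * d j * (2 * γ * (inner ℝ (v i) (v j) : ℝ))
        = 2 * γ * ∑ i, ∑ j, d i * d j * (inner ℝ (v i) (v j) : ℝ) := by
      rw [Finset.mul_sum]
      refine Finset.sum_congr rfl fun i _ => ?_
      rw [Finset.mul_sum]
      exact Finset.sum_congr rfl fun j _ => by ring
    rw [heq]
    positivity
  have hAs : ∀ i j, 2 * γ * (inner ℝ (v i) (v j) : ℝ) = 2 * γ * (inner ℝ (v j) (v i) : ℝ) :=
    fun i j => by rw [real_inner_comm]
  have key := qfnn_exp hAs hA (fun i => c i * Real.exp (-γ * ‖v i‖ ^ 2))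
  calc (0:ℝ) ≤ ∑ i, ∑ j, (c i * Real.exp (-γ * ‖v i‖ ^ 2)) * (c j * Real.exp (-γ * ‖v j‖ ^ 2))
      * Real.exp (2 * γ * (inner ℝ (v i) (v j) : ℝ)) := key
  _ = ∑ i, ∑ j, c i * c j * Real.exp (-γ * ‖v i - v j‖ ^ 2) := by
      refine Finset.sum_congr rfl fun i _ => Finset.sum_congr rfl fun j _ => ?_
      rw [mul_mul_mul_comm, mul_assoc]
      congr 1
      rw [← Real.exp_add, ← Real.exp_add]
      congr 1
      rw [@norm_sub_sq_real]
      ring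
end
noncomputable def I0 : ℝ := ∫ t in Ioi (0:ℝ), (1 - Real.exp (-(t ^ 2))) / t ^ 2

lemma integrableOn_kernel (u : ℝ) (hu : 0 ≤ u) :
    IntegrableOn (fun t => (1 - Real.exp (-(u * t ^ 2))) / t ^ 2) (Ioi (0:ℝ)) := by
  have hcont : ContinuousOn (fun t : ℝ => (1 - Real.exp (-(u * t ^ 2))) / t ^ 2) (Ioi 0) := by
    apply ContinuousOn.div
    · fun_prop
    · fun_prop
    · intro t ht
      exact pow_ne_zero _ (ne_of_gt ht)
  have h1 : IntegrableOn (fun t => (1 - Real.exp (-(u * t ^ 2))) / t ^ 2) (Ioc (0:ℝ) 1) := by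
    refine Integrable.mono' (integrable_const u)
      ((hcont.mono Ioc_subset_Ioi_self).aestronglyMeasurable measurableSet_Ioc) ?_
    rw [ae_restrict_iff' measurableSet_Ioc]
    refine Filter.Eventually.of_forall fun t ht => ?_
    have ht0 : 0 < t := ht.1
    have ht2 : 0 < t ^ 2 := by positivity
    have hle1 : Real.exp (-(u * t ^ 2)) ≤ 1 := Real.exp_le_one_iff.mpr (by nlinarith)
    have hge : 1 - Real.exp (-(u * t ^ 2)) ≤ u * t ^ 2 := by
      nlinarith [Real.add_one_le_exp (-(u * t ^ 2))]
    rw [Real.norm_eq_abs, abs_of_nonneg (div_nonneg (by linarith) (le_of_lt ht2))]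
    rw [div_le_iff₀ ht2]
    nlinarith
  have h2 : IntegrableOn (fun t => (1 - Real.exp (-(u * t ^ 2))) / t ^ 2) (Ioi (1:ℝ)) := by
    refine Integrable.mono' (integrableOn_Ioi_rpow_of_lt (show (-2:ℝ) < -1 by norm_num) one_pos)
      ((hcont.mono (Ioi_subset_Ioi zero_le_one)).aestronglyMeasurable measurableSet_Ioi) ?_
    rw [ae_restrict_iff' measurableSet_Ioi]
    refine Filter.Eventually.of_forall fun t ht => ?_
    have ht0 : (0:ℝ) < t := lt_trans zero_lt_one ht
    have ht2 : 0 < t ^ 2 := by positivity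
    have hle1 : Real.exp (-(u * t ^ 2)) ≤ 1 := Real.exp_le_one_iff.mpr (by nlinarith)
    have hpos : 0 ≤ Real.exp (-(u * t ^ 2)) := Real.exp_nonneg _
    rw [Real.norm_eq_abs, abs_of_nonneg (div_nonneg (by linarith) (le_of_lt ht2))]
    rw [Real.rpow_neg (le_of_lt ht0)]
    rw [show ((2:ℝ) : ℝ) = ((2:ℕ) : ℝ) by norm_num, Real.rpow_natCast]
    rw [div_le_iff₀ ht2, inv_mul_cancel₀ (ne_of_gt ht2)]
    linarith
  have := h1.union h2
  rwa [Ioc_union_Ioi_eq_Ioi zero_le_one] at this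

lemma integral_kernel (u : ℝ) (hu : 0 ≤ u) :
    ∫ t in Ioi (0:ℝ), (1 - Real.exp (-(u * t ^ 2))) / t ^ 2 = Real.sqrt u * I0 := by
  rcases eq_or_lt_of_le hu with h | h
  · simp [← h]
  · have hs : 0 < Real.sqrt u := Real.sqrt_pos.mpr h
    have h1 := integral_comp_mul_left_Ioi
      (fun t => (1 - Real.exp (-(t ^ 2))) / t ^ 2) 0 hs
    rw [mul_zero] at h1
    have h2 : ∀ t ∈ Ioi (0:ℝ),
        (1 - Real.exp (-(u * t ^ 2))) / t ^ 2
          = u * ((1 - Real.exp (-((Real.sqrt u * t) ^ 2))) / (Real.sqrt u * t) ^ 2) := by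
      intro t ht
      have htne : (t:ℝ) ≠ 0 := ne_of_gt ht
      have hsq : (Real.sqrt u * t) ^ 2 = u * t ^ 2 := by
        rw [mul_pow, Real.sq_sqrt hu]
      rw [hsq]
      field_simp
    rw [setIntegral_congr_fun measurableSet_Ioi h2, integral_const_mul, h1]
    rw [smul_eq_mul]
    rw [show I0 = ∫ x in Ioi (0:ℝ), (1 - Real.exp (-(x ^ 2))) / x ^ 2 from rfl]
    have : u * ((Real.sqrt u)⁻¹ * ∫ x in Ioi (0:ℝ), (1 - Real.exp (-(x ^ 2))) / x ^ 2)
        = (u * (Real.sqrt u)⁻¹) * ∫ x in Ioi (0:ℝ), (1 - Real.exp (-(x ^ 2))) / x ^ 2 := by ring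
    rw [this]
    congr 1
    have hh := Real.mul_self_sqrt hu
    field_simp
    rw [Real.sq_sqrt hu]

lemma I0_pos : 0 < I0 := by
  have hint : IntegrableOn (fun t => (1 - Real.exp (-(t ^ 2))) / t ^ 2) (Ioi (0:ℝ)) := by
    have := integrableOn_kernel 1 zero_le_one
    simpa using this
  have hnn : ∀ᵐ t ∂(volume.restrict (Ioi (0:ℝ))),
      (0:ℝ) ≤ (1 - Real.exp (-(t ^ 2))) / t ^ 2 := by
    rw [ae_restrict_iff' measurableSet_Ioi]
    refine Filter.Eventually.of_forall fun t ht => ?_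
    have h1 : Real.exp (-(t ^ 2)) ≤ 1 := Real.exp_le_one_iff.mpr (by nlinarith [mem_Ioi.mp ht])
    exact div_nonneg (by linarith) (sq_nonneg t)
  rw [show I0 = ∫ t in Ioi (0:ℝ), (1 - Real.exp (-(t ^ 2))) / t ^ 2 from rfl]
  rw [setIntegral_pos_iff_support_of_nonneg_ae hnn hint]
  have hsub : Ioi (0:ℝ) ⊆ Function.support fun t => (1 - Real.exp (-(t ^ 2))) / t ^ 2 := by
    intro t ht
    have ht0 : (0:ℝ) < t := ht
    have : Real.exp (-(t ^ 2)) < 1 := by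
      rw [Real.exp_lt_one_iff]
      nlinarith
    exact ne_of_gt (div_pos (by linarith) (by positivity))
  rw [Set.inter_eq_right.mpr hsub]
  simp [Real.volume_Ioi]
section
variable {E : Type*} [NormedAddCommGroup E] [InnerProductSpace ℝ E]

lemma norm_negdef {m : ℕ} (v : Fin m → E) (c : Fin m → ℝ) (hc : ∑ i, c i = 0) :
    ∑ i, ∑ j, c i * c j * ‖v i - v j‖ ≤ 0 := by
  have hint : ∀ i j : Fin m, IntegrableOn
      (fun t => (1 - Real.exp (-(‖v i - v j‖ ^ 2 * t ^ 2))) / t ^ 2) (Ioi (0:ℝ)) :=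
    fun i j => integrableOn_kernel _ (sq_nonneg _)
  have key : ∀ i j : Fin m, c i * c j * ‖v i - v j‖ * I0
      = ∫ t in Ioi (0:ℝ), c i * c j * ((1 - Real.exp (-(‖v i - v j‖ ^ 2 * t ^ 2))) / t ^ 2) := by
    intro i j
    rw [integral_const_mul, integral_kernel _ (sq_nonneg _), Real.sqrt_sq (norm_nonneg _)]
    ring
  have hS : (∑ i, ∑ j, c i * c j * ‖v i - v j‖) * I0
      = ∫ t in Ioi (0:ℝ), ∑ i, ∑ j,
          c i * c j * ((1 - Real.exp (-(‖v i - v j‖ ^ 2 * t ^ 2))) / t ^ 2) := by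
    rw [integral_finset_sum _ (fun i _ => integrable_finset_sum _
      (fun j _ => (hint i j).const_mul _))]
    rw [Finset.sum_mul]
    refine Finset.sum_congr rfl fun i _ => ?_
    rw [integral_finset_sum _ (fun j _ => (hint i j).const_mul _), Finset.sum_mul]
    exact Finset.sum_congr rfl fun j _ => key i j
  have hneg : ∀ t ∈ Ioi (0:ℝ), (∑ i, ∑ j,
      c i * c j * ((1 - Real.exp (-(‖v i - v j‖ ^ 2 * t ^ 2))) / t ^ 2)) ≤ 0 := by
    intro t ht
    have ht0 : (0:ℝ) < t := ht
    have ht2 : (0:ℝ) < t ^ 2 := by positivity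
    have hgauss := gaussPD v (sq_nonneg t) c
    have term : ∀ i j : Fin m, c i * c j * ((1 - Real.exp (-(‖v i - v j‖ ^ 2 * t ^ 2))) / t ^ 2)
        = c i * c j / t ^ 2 - c i * c j * Real.exp (-t ^ 2 * ‖v i - v j‖ ^ 2) / t ^ 2 := by
      intro i j
      rw [show -(‖v i - v j‖ ^ 2 * t ^ 2) = -t ^ 2 * ‖v i - v j‖ ^ 2 by ring]
      field_simp
    have e1 : ∑ i, ∑ j, c i * c j * ((1 - Real.exp (-(‖v i - v j‖ ^ 2 * t ^ 2))) / t ^ 2)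
        = (∑ i, ∑ j, c i * c j) / t ^ 2
          - (∑ i, ∑ j, c i * c j * Real.exp (-t ^ 2 * ‖v i - v j‖ ^ 2)) / t ^ 2 := by
      rw [Finset.sum_div, Finset.sum_div, ← Finset.sum_sub_distrib]
      refine Finset.sum_congr rfl fun i _ => ?_
      rw [Finset.sum_div, Finset.sum_div, ← Finset.sum_sub_distrib]
      exact Finset.sum_congr rfl fun j _ => term i j
    have e2 : ∑ i, ∑ j, c i * c j = (0:ℝ) := by
      rw [← Finset.sum_mul_sum, hc, zero_mul]
    rw [e1, e2, zero_div, zero_sub]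
    have h2 : 0 ≤ (∑ i, ∑ j, c i * c j * Real.exp (-t ^ 2 * ‖v i - v j‖ ^ 2)) / t ^ 2 :=
      div_nonneg hgauss (le_of_lt ht2)
    linarith
  have hI : (∑ i, ∑ j, c i * c j * ‖v i - v j‖) * I0 ≤ 0 := by
    rw [hS]
    refine integral_nonpos_of_ae ((ae_restrict_iff' measurableSet_Ioi).mpr
      (Filter.Eventually.of_forall hneg))
  by_contra h
  push_neg at h
  nlinarith [I0_pos]
lemma qfnn_phi {m : ℕ} (v : Fin m → E) :
    QFnn (fun i j => ‖v i‖ + ‖v j‖ - ‖v i - v j‖) := by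
  intro d
  have hneg := norm_negdef (Fin.cons 0 v : Fin (m+1) → E)
    (Fin.cons (-∑ i, d i) d) (by simp [Fin.sum_univ_succ])
  simp only [Fin.sum_univ_succ, Fin.cons_zero, Fin.cons_succ, sub_zero, zero_sub, norm_neg,
    norm_zero, sub_self, mul_zero, zero_mul, neg_mul, mul_neg, neg_neg, zero_add] at hneg
  -- massage goal into linear combination of hneg pieces
  have e1 : ∑ i, ∑ j, d i * d j * (‖v i‖ + ‖v j‖ - ‖v i - v j‖)
      = (∑ i, d i * ‖v i‖) * (∑ i, d i) + (∑ i, d i) * (∑ i, d i * ‖v i‖)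
        - ∑ i, ∑ j, d i * d j * ‖v i - v j‖ := by
    rw [Finset.sum_mul_sum, Finset.sum_mul_sum, ← Finset.sum_add_distrib,
      ← Finset.sum_sub_distrib]
    refine Finset.sum_congr rfl fun i _ => ?_
    rw [← Finset.sum_add_distrib, ← Finset.sum_sub_distrib]
    refine Finset.sum_congr rfl fun j _ => ?_
    ring
  have a1 : ∑ x, -((∑ i, d i) * d x * ‖v x‖) = -((∑ i, d i) * ∑ x, d x * ‖v x‖) := by
    rw [Finset.mul_sum, ← Finset.sum_neg_distrib]
    exact Finset.sum_congr rfl fun x _ => by ring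
  have a2 : ∑ x, -((d x * ∑ i, d i) * ‖v x‖) = -((∑ i, d i) * ∑ x, d x * ‖v x‖) := by
    rw [Finset.mul_sum, ← Finset.sum_neg_distrib]
    exact Finset.sum_congr rfl fun x _ => by ring
  rw [Finset.sum_add_distrib, a1, a2] at hneg
  rw [e1]
  linarith [hneg]

lemma laplacePD {m : ℕ} (v : Fin m → E) {γ : ℝ} (hγ : 0 ≤ γ) (c : Fin m → ℝ) :
    0 ≤ ∑ i, ∑ j, c i * c j * Real.exp (-γ * ‖v i - v j‖) := by
  have hA : QFnn (fun i j => γ * (‖v i‖ + ‖v j‖ - ‖v i - v j‖)) := by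
    intro d
    have h := qfnn_phi v d
    have heq : ∑ i, ∑ j, d i * d j * (γ * (‖v i‖ + ‖v j‖ - ‖v i - v j‖))
        = γ * ∑ i, ∑ j, d i * d j * (‖v i‖ + ‖v j‖ - ‖v i - v j‖) := by
      rw [Finset.mul_sum]
      refine Finset.sum_congr rfl fun i _ => ?_
      rw [Finset.mul_sum]
      exact Finset.sum_congr rfl fun j _ => by ring
    rw [heq]
    positivity
  have hAs : ∀ i j, γ * (‖v i‖ + ‖v j‖ - ‖v i - v j‖) = γ * (‖v j‖ + ‖v i‖ - ‖v j - v i‖) :=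
    fun i j => by rw [norm_sub_rev]; ring
  have key := qfnn_exp hAs hA (fun i => c i * Real.exp (-γ * ‖v i‖))
  calc (0:ℝ) ≤ ∑ i, ∑ j, (c i * Real.exp (-γ * ‖v i‖)) * (c j * Real.exp (-γ * ‖v j‖))
      * Real.exp (γ * (‖v i‖ + ‖v j‖ - ‖v i - v j‖)) := key
  _ = ∑ i, ∑ j, c i * c j * Real.exp (-γ * ‖v i - v j‖) := by
      refine Finset.sum_congr rfl fun i _ => Finset.sum_congr rfl fun j _ => ?_
      rw [mul_mul_mul_comm, mul_assoc]
      congr 1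
      rw [← Real.exp_add, ← Real.exp_add]
      congr 1
      ring
end

/-- Proposition 3. On (any compact subset of) the Wasserstein space
`W₂(I)` over a compact interval `I = [a,b]`, for any `γ > 0` both the Gaussian-type
kernel `exp(-γ d_W(μ,ν)²)` and the Laplacian-type kernel `exp(-γ d_W(μ,ν))` are
positive definite kernels: all their finite quadratic forms are nonnegative. -/
theorem wasserstein_gaussian_and_laplacian_kernels_posdef
    (a b : ℝ) (hab : a ≤ b) (γ : ℝ) (hγ : 0 < γ)
    (m : ℕ) (μs : Fin m → Measure ℝ)
    (hprob : ∀ i, IsProbabilityMeasure (μs i))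
    (hsupp : ∀ i, μs i (Set.Icc a b)ᶜ = 0)
    (hmom : ∀ i, MeasureTheory.MemLp id 2 (μs i))
    (c : Fin m → ℝ) :
    0 ≤ ∑ i, ∑ j, c i * c j * Real.exp (-γ * wassersteinDist (μs i) (μs j) ^ 2) ∧
      0 ≤ ∑ i, ∑ j, c i * c j * Real.exp (-γ * wassersteinDist (μs i) (μs j)) := by
  classical
  set q : Fin m → ℝ → ℝ := fun i s =>
    if s ≤ 0 then a else if 1 ≤ s then b else quantileFn (μs i) s with hq
  -- basic cdf facts
  have hcdfb : ∀ i, ProbabilityTheory.cdf (μs i) b = 1 := by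
    intro i
    haveI := hprob i
    rw [ProbabilityTheory.cdf_eq_real, measureReal_def]
    have h0 : μs i (Iic b)ᶜ = 0 := by
      refine measure_mono_null ?_ (hsupp i)
      intro x hx
      simp only [Set.mem_compl_iff, Set.mem_Iic, not_le] at hx
      simp only [Set.mem_compl_iff, Set.mem_Icc, not_and, not_le]
      intro _
      linarith
    rw [(prob_compl_eq_zero_iff measurableSet_Iic).mp h0]
    simp
  have hcdflt : ∀ i, ∀ t : ℝ, t < a → ProbabilityTheory.cdf (μs i) t = 0 := by
    intro i t ht
    haveI := hprob i
    rw [ProbabilityTheory.cdf_eq_real, measureReal_def]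
    have h0 : μs i (Iic t) = 0 := by
      refine measure_mono_null ?_ (hsupp i)
      intro x hx
      simp only [Set.mem_Iic] at hx
      simp only [Set.mem_compl_iff, Set.mem_Icc, not_and, not_le]
      intro ha
      linarith
    rw [h0]
    simp
  -- quantile bounds
  have hbddS : ∀ i, ∀ s : ℝ, 0 < s → ∀ t ∈ {t : ℝ | s ≤ ProbabilityTheory.cdf (μs i) t}, a ≤ t := by
    intro i s hs t ht
    by_contra hlt
    push_neg at hlt
    rw [Set.mem_setOf_eq, hcdflt i t hlt] at ht
    linarith
  have hmemS : ∀ i, ∀ s : ℝ, s ≤ 1 → b ∈ {t : ℝ | s ≤ ProbabilityTheory.cdf (μs i) t} := by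
    intro i s hs
    rw [Set.mem_setOf_eq, hcdfb i]
    exact hs
  have hmem : ∀ i, ∀ s ∈ Ioo (0:ℝ) 1, quantileFn (μs i) s ∈ Icc a b := by
    intro i s hs
    constructor
    · exact le_csInf ⟨b, hmemS i s (le_of_lt hs.2)⟩ (hbddS i s hs.1)
    · exact csInf_le ⟨a, hbddS i s hs.1⟩ (hmemS i s (le_of_lt hs.2))
  have hrange : ∀ i, ∀ s : ℝ, q i s ∈ Icc a b := by
    intro i s
    rw [hq]
    by_cases h0 : s ≤ 0
    · simp [h0, hab, le_refl]
    · by_cases h1 : (1:ℝ) ≤ s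
      · simp [h0, h1, hab, le_refl]
      · push_neg at h0 h1
        simpa [not_le.mpr h0, not_le.mpr h1] using hmem i s ⟨h0, h1⟩
  have hmono : ∀ i, Monotone (q i) := by
    intro i s s' hss'
    rw [hq]
    simp only
    by_cases h0 : s ≤ 0
    · rw [if_pos h0]
      exact (hrange i s').1
    · have h0' : ¬ s' ≤ 0 := fun h => h0 (le_trans hss' h)
      rw [if_neg h0, if_neg h0']
      by_cases h1 : (1:ℝ) ≤ s
      · rw [if_pos h1, if_pos (le_trans h1 hss')]
      · rw [if_neg h1]
        push_neg at h0 h1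
        by_cases h1' : (1:ℝ) ≤ s'
        · rw [if_pos h1']
          exact (hmem i s ⟨h0, h1⟩).2
        · rw [if_neg h1']
          push_neg at h0' h1'
          refine csInf_le_csInf ⟨a, hbddS i s h0⟩ ⟨b, hmemS i s' (le_of_lt h1')⟩ ?_
          intro t ht
          rw [Set.mem_setOf_eq] at ht ⊢
          linarith
  have hwd : ∀ i j, wassersteinDist (μs i) (μs j)
      = Real.sqrt (∫ s in Ioo (0:ℝ) 1, (q i s - q j s) ^ 2) := by
    intro i j
    rw [wassersteinDist]
    congr 1
    refine (setIntegral_congr_fun measurableSet_Ioo fun s hs => ?_)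
    rw [hq]
    simp only [not_le.mpr hs.1, not_le.mpr hs.2, if_false]
  -- Gram matrix
  set G : Fin m → Fin m → ℝ := fun i j => ∫ s in Ioo (0:ℝ) 1, q i s * q j s with hG
  set M : ℝ := max |a| |b| with hM
  have habs : ∀ i s, |q i s| ≤ M := by
    intro i s
    rcases hrange i s with ⟨h1, h2⟩
    rw [abs_le]
    constructor
    · calc -M ≤ -|a| := by simp [hM]
      _ ≤ a := neg_abs_le a
      _ ≤ q i s := h1
    · calc q i s ≤ b := h2
      _ ≤ |b| := le_abs_self b
      _ ≤ M := le_max_right _ _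
  have hmeasq : ∀ i, Measurable (q i) := fun i => (hmono i).measurable
  have hintprod : ∀ i j, IntegrableOn (fun s => q i s * q j s) (Ioo (0:ℝ) 1) volume := by
    intro i j
    refine Integrable.mono' (g := fun _ => M * M)
      (integrableOn_const measure_Ioo_lt_top.ne)
      ((hmeasq i).mul (hmeasq j)).aestronglyMeasurable ?_
    refine Filter.Eventually.of_forall fun s => ?_
    rw [Real.norm_eq_abs, abs_mul]
    exact mul_le_mul (habs i s) (habs j s) (abs_nonneg _) (le_trans (abs_nonneg _) (habs i s))
  have hGqf : QFnn G := by
    intro d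
    have e1 : ∑ i, ∑ j, d i * d j * G i j
        = ∫ s in Ioo (0:ℝ) 1, (∑ i, d i * q i s) ^ 2 := by
      rw [show (fun s => (∑ i, d i * q i s) ^ 2)
          = fun s => ∑ i, ∑ j, (d i * q i s) * (d j * q j s) by
        funext s
        rw [pow_two, Finset.sum_mul_sum]]
      rw [integral_finset_sum _ (fun i _ => integrable_finset_sum _ (fun j _ =>
        ((hintprod i j).const_mul (d i * d j)).congr
          (Filter.Eventually.of_forall fun s => by ring)))]
      refine Finset.sum_congr rfl fun i _ => ?_
      rw [integral_finset_sum _ (fun j _ =>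
        ((hintprod i j).const_mul (d i * d j)).congr
          (Filter.Eventually.of_forall fun s => by ring))]
      refine Finset.sum_congr rfl fun j _ => ?_
      rw [hG]
      simp only
      rw [← integral_const_mul]
      refine setIntegral_congr_fun measurableSet_Ioo fun s _ => ?_
      ring
    rw [e1]
    exact setIntegral_nonneg measurableSet_Ioo fun s _ => sq_nonneg _
  have hGs : ∀ i j, G i j = G j i := by
    intro i j
    rw [hG]
    simp only
    refine setIntegral_congr_fun measurableSet_Ioo fun s _ => ?_
    ring
  obtain ⟨N, hN⟩ := (by open scoped MatrixOrder in exact CStarAlgebra.nonneg_iff_eq_star_mul_self.mp (posSemidef_of_qfnn hGs hGqf).nonneg)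
  have hGentry : ∀ i j, G i j = ∑ k, N k i * N k j := by
    intro i j
    have := congrFun (congrFun hN i) j
    simpa [Matrix.mul_apply, Matrix.conjTranspose_apply] using this
  set v : Fin m → EuclideanSpace ℝ (Fin m) := fun i => WithLp.toLp 2 (fun k => N k i) with hv
  have hinner : ∀ i j, (inner ℝ (v i) (v j) : ℝ) = G i j := by
    intro i j
    rw [hGentry i j, PiLp.inner_apply]
    simp [hv, mul_comm]
  have hnormq : ∀ i, ‖v i‖ ^ 2 = G i i := by
    intro i
    rw [← hinner i i, ← real_inner_self_eq_norm_sq]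
  have hnorm : ∀ i j, ‖v i - v j‖ ^ 2 = ∫ s in Ioo (0:ℝ) 1, (q i s - q j s) ^ 2 := by
    intro i j
    have e2 : ∫ s in Ioo (0:ℝ) 1, (q i s - q j s) ^ 2
        = (∫ s in Ioo (0:ℝ) 1, q i s * q i s)
          - (∫ s in Ioo (0:ℝ) 1, (2:ℝ) * (q i s * q j s))
          + ∫ s in Ioo (0:ℝ) 1, q j s * q j s := by
      have hsub : Integrable (fun s => q i s * q i s - 2 * (q i s * q j s))
          (volume.restrict (Ioo (0:ℝ) 1)) :=
        (hintprod i i).sub ((hintprod i j).const_mul 2)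
      rw [← integral_sub (hintprod i i) ((hintprod i j).const_mul 2),
        ← integral_add hsub (hintprod j j)]
      refine setIntegral_congr_fun measurableSet_Ioo fun s _ => ?_
      ring
    rw [e2, integral_const_mul, @norm_sub_sq_real, hinner i j, hnormq i, hnormq j]
  have hdist : ∀ i j, wassersteinDist (μs i) (μs j) = ‖v i - v j‖ := by
    intro i j
    rw [hwd i j, ← hnorm i j, Real.sqrt_sq (norm_nonneg _)]
  constructor
  · have key := gaussPD v (le_of_lt hγ) c
    refine le_trans key (le_of_eq ?_)
    refine Finset.sum_congr rfl fun i _ => Finset.sum_congr rfl fun j _ => ?_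
    rw [hdist i j]
  · have key := laplacePD v (le_of_lt hγ) c
    refine le_trans key (le_of_eq ?_)
    refine Finset.sum_congr rfl fun i _ => Finset.sum_congr rfl fun j _ => ?_
    rw [hdist i j]
end

section
/- The log-Euclidean distance d_log(A, B) = ‖log(A) - log(B)‖_F defines a metric on Sym⁺(r), and for any γ > 0, the kernels κ_{G,log}(A,B) = exp(-γ d_log(A,B)²) and κ_{L,log}(A,B) = exp(-γ d_log(A,B)) are positive definite kernels on Sym⁺(r). -/
open Matrix

/-- The Frobenius norm squared `tr(Mᵀ M)` of a square real matrix. -/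
noncomputable def frobNormSq {r : ℕ} (M : Matrix (Fin r) (Fin r) ℝ) : ℝ :=
  Matrix.trace (M.transpose * M)

section KernelAux

open Finset

lemma gram_pow_nonneg {m : ℕ} {ι : Type*} [Fintype ι] (p : Fin m → ι → ℝ)
    (b : Fin m → ℝ) (n : ℕ) :
    0 ≤ ∑ i, ∑ j, b i * b j * (∑ k, p i k * p j k) ^ n := by
  classical
  set S := Fintype.piFinset (fun _ : Fin n => (univ : Finset ι)) with hS
  have expand : ∀ i j : Fin m, (∑ k, p i k * p j k) ^ n
      = ∑ f ∈ S, ((∏ t, p i (f t)) * (∏ t, p j (f t))) := by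
    intro i j
    have h1 : (∑ k, p i k * p j k) ^ n = ∏ _t : Fin n, (∑ k, p i k * p j k) := by
      rw [Finset.prod_const, Finset.card_univ, Fintype.card_fin]
    rw [h1, Finset.prod_univ_sum]
    exact Finset.sum_congr rfl fun f _ => by rw [Finset.prod_mul_distrib]
  have key : ∑ i, ∑ j, b i * b j * (∑ k, p i k * p j k) ^ n
      = ∑ f ∈ S, (∑ i, b i * ∏ t, p i (f t)) ^ 2 := by
    calc ∑ i, ∑ j, b i * b j * (∑ k, p i k * p j k) ^ n
        = ∑ i, ∑ j, ∑ f ∈ S, (b i * ∏ t, p i (f t)) * (b j * ∏ t, p j (f t)) := by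
          refine sum_congr rfl fun i _ => sum_congr rfl fun j _ => ?_
          rw [expand, Finset.mul_sum]
          exact sum_congr rfl fun f _ => by ring
      _ = ∑ i, ∑ f ∈ S, ∑ j, (b i * ∏ t, p i (f t)) * (b j * ∏ t, p j (f t)) := by
          exact sum_congr rfl fun i _ => Finset.sum_comm
      _ = ∑ f ∈ S, ∑ i, ∑ j, (b i * ∏ t, p i (f t)) * (b j * ∏ t, p j (f t)) :=
          Finset.sum_comm
      _ = ∑ f ∈ S, (∑ i, b i * ∏ t, p i (f t)) ^ 2 := by
          refine sum_congr rfl fun f _ => ?_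
          rw [sq, Finset.sum_mul_sum]
  rw [key]
  exact Finset.sum_nonneg fun f _ => sq_nonneg _

lemma gram_exp_nonneg {m : ℕ} {ι : Type*} [Fintype ι] (p : Fin m → ι → ℝ)
    (b : Fin m → ℝ) :
    0 ≤ ∑ i, ∑ j, b i * b j * Real.exp (∑ k, p i k * p j k) := by
  classical
  have hexp : ∀ x : ℝ, Real.exp x = ∑' n : ℕ, x ^ n / (Nat.factorial n) := by
    intro x
    rw [Real.exp_eq_exp_ℝ, NormedSpace.exp_eq_tsum_div]
  have hsummable : ∀ (i j : Fin m),
      Summable (fun n : ℕ => b i * b j * ((∑ k, p i k * p j k) ^ n / (Nat.factorial n))) :=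
    fun i j => (Real.summable_pow_div_factorial _).mul_left _
  have step : ∑ i, ∑ j, b i * b j * Real.exp (∑ k, p i k * p j k)
      = ∑' n : ℕ, ∑ i, ∑ j, b i * b j * ((∑ k, p i k * p j k) ^ n / (Nat.factorial n)) := by
    rw [Summable.tsum_finsetSum (fun i _ => summable_sum fun j _ => hsummable i j)]
    refine sum_congr rfl fun i _ => ?_
    rw [Summable.tsum_finsetSum (fun j _ => hsummable i j)]
    refine sum_congr rfl fun j _ => ?_
    rw [hexp, ← tsum_mul_left]
  rw [step]
  refine tsum_nonneg fun n => ?_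
  have : ∑ i, ∑ j, b i * b j * ((∑ k, p i k * p j k) ^ n / (Nat.factorial n))
      = (∑ i, ∑ j, b i * b j * (∑ k, p i k * p j k) ^ n) / (Nat.factorial n) := by
    rw [Finset.sum_div]
    exact sum_congr rfl fun i _ => by rw [Finset.sum_div]; exact sum_congr rfl fun j _ => by ring
  rw [this]
  exact div_nonneg (gram_pow_nonneg p b n) (by positivity)

lemma gauss_nonneg {m : ℕ} {ι : Type*} [Fintype ι] (s : ℝ) (hs : 0 ≤ s)
    (p : Fin m → ι → ℝ) (c : Fin m → ℝ) :
    0 ≤ ∑ i, ∑ j, c i * c j * Real.exp (-s * ∑ k, (p i k - p j k) ^ 2) := by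
  classical
  set q : Fin m → ι → ℝ := fun i k => Real.sqrt (2 * s) * p i k with hq
  set b : Fin m → ℝ := fun i => c i * Real.exp (-s * ∑ k, p i k ^ 2) with hb
  have hqq : ∀ i j : Fin m, ∑ k, q i k * q j k = 2 * s * ∑ k, p i k * p j k := by
    intro i j
    rw [Finset.mul_sum]
    refine sum_congr rfl fun k _ => ?_
    have : Real.sqrt (2 * s) * Real.sqrt (2 * s) = 2 * s :=
      Real.mul_self_sqrt (by linarith)
    simp only [hq]
    calc √(2 * s) * p i k * (√(2 * s) * p j k)
        = √(2 * s) * √(2 * s) * (p i k * p j k) := by ring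
      _ = 2 * s * (p i k * p j k) := by rw [this]
  have key : ∀ i j : Fin m, c i * c j * Real.exp (-s * ∑ k, (p i k - p j k) ^ 2)
      = b i * b j * Real.exp (∑ k, q i k * q j k) := by
    intro i j
    have hsum : -s * ∑ k, (p i k - p j k) ^ 2
        = (-s * ∑ k, p i k ^ 2) + (-s * ∑ k, p j k ^ 2) + (2 * s * ∑ k, p i k * p j k) := by
      have : ∑ k, (p i k - p j k) ^ 2
          = ∑ k, p i k ^ 2 + ∑ k, p j k ^ 2 - 2 * ∑ k, p i k * p j k := by
        rw [Finset.mul_sum, ← Finset.sum_add_distrib, ← Finset.sum_sub_distrib]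
        exact sum_congr rfl fun k _ => by ring
      rw [this]; ring
    rw [hqq i j, hsum, Real.exp_add, Real.exp_add, hb]
    simp only []
    ring
  calc (0:ℝ) ≤ ∑ i, ∑ j, b i * b j * Real.exp (∑ k, q i k * q j k) :=
        gram_exp_nonneg q b
    _ = ∑ i, ∑ j, c i * c j * Real.exp (-s * ∑ k, (p i k - p j k) ^ 2) :=
        sum_congr rfl fun i _ => sum_congr rfl fun j _ => (key i j).symm

end KernelAux

section IntegralAux

open MeasureTheory Set Finset

noncomputable def lapC : ℝ := ∫ t in Ioi (0:ℝ), (1 - Real.exp (-t)) * t ^ (-(3/2) : ℝ)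

lemma lap_aux_contOn (a : ℝ) :
    ContinuousOn (fun t : ℝ => (1 - Real.exp (-(a * t))) * t ^ (-(3/2) : ℝ)) (Ioi 0) := by
  refine ContinuousOn.mul ?_ ?_
  · exact (continuous_const.sub ((Real.continuous_exp.comp
      (continuous_const.mul continuous_id).neg))).continuousOn
  · intro t ht
    exact (Real.continuousAt_rpow_const t _ (Or.inl (ne_of_gt ht))).continuousWithinAt

lemma lap_aux_integrable {a : ℝ} (ha : 0 ≤ a) :
    IntegrableOn (fun t : ℝ => (1 - Real.exp (-(a * t))) * t ^ (-(3/2) : ℝ)) (Ioi 0) := by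
  have hmeas : ∀ s ⊆ Ioi (0:ℝ), MeasurableSet s →
      AEStronglyMeasurable (fun t : ℝ => (1 - Real.exp (-(a * t))) * t ^ (-(3/2) : ℝ))
        (volume.restrict s) := fun s hs hms =>
    ((lap_aux_contOn a).mono hs).aestronglyMeasurable hms
  have h01 : IntegrableOn (fun t : ℝ => (1 - Real.exp (-(a * t))) * t ^ (-(3/2) : ℝ))
      (Ioc 0 1) := by
    have hbound : IntegrableOn (fun t : ℝ => a * t ^ (-(1/2) : ℝ)) (Ioc 0 1) := by
      have : IntervalIntegrable (fun t : ℝ => t ^ (-(1/2) : ℝ)) volume 0 1 :=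
        intervalIntegral.intervalIntegrable_rpow' (by norm_num)
      rw [intervalIntegrable_iff_integrableOn_Ioc_of_le (by norm_num : (0:ℝ) ≤ 1)] at this
      exact this.const_mul a
    refine hbound.mono' (hmeas _ Ioc_subset_Ioi_self measurableSet_Ioc) ?_
    refine (ae_restrict_iff' measurableSet_Ioc).2 (ae_of_all _ fun t ht => ?_)
    have ht0 : 0 < t := ht.1
    have h1 : 0 ≤ 1 - Real.exp (-(a * t)) := by
      have : Real.exp (-(a * t)) ≤ 1 := Real.exp_le_one_iff.2 (by nlinarith)
      linarith
    have h2 : 1 - Real.exp (-(a * t)) ≤ a * t := by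
      have := Real.add_one_le_exp (-(a * t))
      nlinarith [Real.exp_pos (-(a*t))]
    have h3 : (0:ℝ) < t ^ (-(3/2) : ℝ) := Real.rpow_pos_of_pos ht0 _
    rw [Real.norm_eq_abs, abs_of_nonneg (by positivity)]
    calc (1 - Real.exp (-(a * t))) * t ^ (-(3/2) : ℝ)
        ≤ (a * t) * t ^ (-(3/2) : ℝ) := by nlinarith
      _ = a * t ^ (-(1/2) : ℝ) := by
          rw [mul_assoc]
          congr 1
          have : t * t ^ (-(3/2) : ℝ) = t ^ ((1:ℝ) + -(3/2)) := by
            rw [Real.rpow_add ht0, Real.rpow_one]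
          rw [this]
          norm_num
  have h1i : IntegrableOn (fun t : ℝ => (1 - Real.exp (-(a * t))) * t ^ (-(3/2) : ℝ))
      (Ioi 1) := by
    have hbound : IntegrableOn (fun t : ℝ => t ^ (-(3/2) : ℝ)) (Ioi 1) :=
      integrableOn_Ioi_rpow_of_lt (by norm_num) (by norm_num)
    refine hbound.mono' (hmeas _ (fun t ht => mem_Ioi.2 (lt_trans one_pos ht)) measurableSet_Ioi) ?_
    refine (ae_restrict_iff' measurableSet_Ioi).2 (ae_of_all _ fun t ht => ?_)
    have ht0 : (0:ℝ) < t := lt_trans one_pos ht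
    have h1 : 0 ≤ 1 - Real.exp (-(a * t)) := by
      have : Real.exp (-(a * t)) ≤ 1 := Real.exp_le_one_iff.2 (by nlinarith)
      linarith
    have h2 : 1 - Real.exp (-(a * t)) ≤ 1 := by
      have := Real.exp_pos (-(a * t)); linarith
    have h3 : (0:ℝ) < t ^ (-(3/2) : ℝ) := Real.rpow_pos_of_pos ht0 _
    rw [Real.norm_eq_abs, abs_of_nonneg (by positivity)]
    nlinarith
  have : Set.Ioc (0:ℝ) 1 ∪ Set.Ioi 1 = Set.Ioi 0 := Set.Ioc_union_Ioi_eq_Ioi (by norm_num)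
  rw [← this]
  exact h01.union h1i

lemma lap_scaling {a : ℝ} (ha : 0 < a) :
    ∫ t in Ioi (0:ℝ), (1 - Real.exp (-(a * t))) * t ^ (-(3/2) : ℝ)
      = Real.sqrt a * lapC := by
  set g : ℝ → ℝ := fun u => (1 - Real.exp (-u)) * u ^ (-(3/2) : ℝ) with hg
  have step1 : ∀ t ∈ Ioi (0:ℝ),
      (1 - Real.exp (-(a * t))) * t ^ (-(3/2) : ℝ) = a ^ ((3:ℝ)/2) * g (a * t) := by
    intro t ht
    have ht0 : (0:ℝ) < t := ht
    have : (a * t) ^ (-(3/2) : ℝ) = a ^ (-(3/2) : ℝ) * t ^ (-(3/2) : ℝ) :=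
      Real.mul_rpow ha.le ht0.le
    rw [hg]
    simp only []
    rw [this]
    have haa : a ^ ((3:ℝ)/2) * a ^ (-(3/2) : ℝ) = 1 := by
      rw [← Real.rpow_add ha]; norm_num
    calc (1 - Real.exp (-(a * t))) * t ^ (-(3/2) : ℝ)
        = (a ^ ((3:ℝ)/2) * a ^ (-(3/2):ℝ)) * ((1 - Real.exp (-(a * t))) * t ^ (-(3/2) : ℝ)) := by
          rw [haa, one_mul]
      _ = a ^ ((3:ℝ)/2) * ((1 - Real.exp (-(a * t))) * (a ^ (-(3/2):ℝ) * t ^ (-(3/2) : ℝ))) := by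
          ring
  have step2 : (∫ t in Ioi (0:ℝ), g (a * t)) = a⁻¹ • ∫ u in Ioi (a * 0), g u :=
    integral_comp_mul_left_Ioi g 0 ha
  rw [setIntegral_congr_fun measurableSet_Ioi step1, MeasureTheory.integral_const_mul, step2]
  rw [mul_zero]
  have : (∫ u in Ioi (0:ℝ), g u) = lapC := rfl
  rw [this]
  rw [smul_eq_mul]
  rw [show a ^ ((3:ℝ)/2) * (a⁻¹ * lapC) = (a ^ ((3:ℝ)/2) * a⁻¹) * lapC from by ring]
  congr 1
  rw [← Real.rpow_neg_one a, ← Real.rpow_add ha, Real.sqrt_eq_rpow]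
  norm_num

lemma lapC_pos : 0 < lapC := by
  have hint : IntegrableOn (fun t : ℝ => (1 - Real.exp (-t)) * t ^ (-(3/2) : ℝ)) (Ioi 0) := by
    have := lap_aux_integrable (zero_le_one' ℝ)
    simpa using this
  have hnn : 0 ≤ᵐ[volume.restrict (Ioi (0:ℝ))]
      fun t : ℝ => (1 - Real.exp (-t)) * t ^ (-(3/2) : ℝ) := by
    refine (ae_restrict_iff' measurableSet_Ioi).2 (ae_of_all _ fun t ht => ?_)
    have ht0 : (0:ℝ) < t := ht
    have h1 : Real.exp (-t) < 1 := Real.exp_lt_one_iff.2 (by linarith)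
    have h3 : (0:ℝ) < t ^ (-(3/2) : ℝ) := Real.rpow_pos_of_pos ht0 _
    exact mul_nonneg (by linarith) h3.le
  rw [show lapC = ∫ t in Ioi (0:ℝ), (1 - Real.exp (-t)) * t ^ (-(3/2) : ℝ) from rfl]
  rw [setIntegral_pos_iff_support_of_nonneg_ae hnn hint]
  have hsub : Ioi (0:ℝ) ⊆ Function.support (fun t : ℝ => (1 - Real.exp (-t)) * t ^ (-(3/2) : ℝ)) ∩ Ioi 0 := by
    intro t ht
    have ht0 : (0:ℝ) < t := ht
    have h1 : Real.exp (-t) < 1 := Real.exp_lt_one_iff.2 (by linarith)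
    have h3 : (0:ℝ) < t ^ (-(3/2) : ℝ) := Real.rpow_pos_of_pos ht0 _
    exact ⟨ne_of_gt (mul_pos (by linarith) h3), ht⟩
  calc (0:ENNReal) < volume (Ioi (0:ℝ)) := by simp
    _ ≤ _ := measure_mono hsub

lemma lap_sqrt_rep {a : ℝ} (ha : 0 ≤ a) :
    Real.sqrt a = lapC⁻¹ * ∫ t in Ioi (0:ℝ), (1 - Real.exp (-(a * t))) * t ^ (-(3/2) : ℝ) := by
  rcases eq_or_lt_of_le ha with h | h
  · rw [← h]
    simp [Real.sqrt_zero]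
  · rw [lap_scaling h]
    rw [mul_comm (Real.sqrt a) lapC, inv_mul_cancel_left₀ (ne_of_gt lapC_pos)]

/-- Negative definiteness of the Euclidean distance. -/
lemma dist_neg_def {m : ℕ} {ι : Type*} [Fintype ι] (p : Fin m → ι → ℝ)
    (e : Fin m → ℝ) (he : ∑ i, e i = 0) :
    ∑ i, ∑ j, e i * e j * Real.sqrt (∑ k, (p i k - p j k) ^ 2) ≤ 0 := by
  classical
  set D : Fin m → Fin m → ℝ := fun i j => ∑ k, (p i k - p j k) ^ 2 with hD
  have hDnn : ∀ i j, 0 ≤ D i j := fun i j => Finset.sum_nonneg fun k _ => sq_nonneg _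
  -- rewrite each sqrt by its integral representation
  have step1 : ∑ i, ∑ j, e i * e j * Real.sqrt (D i j)
      = lapC⁻¹ * ∑ i, ∑ j, ∫ t in Ioi (0:ℝ),
          e i * e j * ((1 - Real.exp (-(D i j * t))) * t ^ (-(3/2) : ℝ)) := by
    rw [Finset.mul_sum]
    refine sum_congr rfl fun i _ => ?_
    rw [Finset.mul_sum]
    refine sum_congr rfl fun j _ => ?_
    rw [lap_sqrt_rep (hDnn i j), MeasureTheory.integral_const_mul]
    ring
  have hint : ∀ i j : Fin m, IntegrableOn
      (fun t : ℝ => e i * e j * ((1 - Real.exp (-(D i j * t))) * t ^ (-(3/2) : ℝ)))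
      (Ioi 0) := fun i j => (lap_aux_integrable (hDnn i j)).const_mul _
  have step2 : ∑ i, ∑ j, (∫ t in Ioi (0:ℝ),
        e i * e j * ((1 - Real.exp (-(D i j * t))) * t ^ (-(3/2) : ℝ)))
      = ∫ t in Ioi (0:ℝ), ∑ i, ∑ j,
          e i * e j * ((1 - Real.exp (-(D i j * t))) * t ^ (-(3/2) : ℝ)) := by
    rw [MeasureTheory.integral_finset_sum _ (fun i _ => integrable_finset_sum _ fun j _ => hint i j)]
    exact Finset.sum_congr rfl fun i _ =>
      (MeasureTheory.integral_finset_sum _ (fun j _ => hint i j)).symm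
  have inner_nonpos : ∀ t ∈ Ioi (0:ℝ),
      ∑ i, ∑ j, e i * e j * ((1 - Real.exp (-(D i j * t))) * t ^ (-(3/2) : ℝ)) ≤ 0 := by
    intro t ht
    have ht0 : (0:ℝ) < t := ht
    have hsplit : ∑ i, ∑ j, e i * e j * ((1 - Real.exp (-(D i j * t))) * t ^ (-(3/2) : ℝ))
        = t ^ (-(3/2) : ℝ) * ((∑ i, e i) * (∑ j, e j)
            - ∑ i, ∑ j, e i * e j * Real.exp (-t * D i j)) := by
      rw [Finset.sum_mul_sum, ← Finset.sum_sub_distrib, Finset.mul_sum]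
      refine sum_congr rfl fun i _ => ?_
      rw [← Finset.sum_sub_distrib, Finset.mul_sum]
      refine sum_congr rfl fun j _ => ?_
      have : -(D i j * t) = -t * D i j := by ring
      rw [this]
      ring
    rw [hsplit, he, zero_mul, zero_sub]
    have hg : 0 ≤ ∑ i, ∑ j, e i * e j * Real.exp (-t * D i j) := by
      have := gauss_nonneg t ht0.le p e
      simpa [hD] using this
    have h3 : (0:ℝ) ≤ t ^ (-(3/2) : ℝ) := (Real.rpow_pos_of_pos ht0 _).le
    exact mul_nonpos_of_nonneg_of_nonpos h3 (by linarith)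
  have : (∫ t in Ioi (0:ℝ), ∑ i, ∑ j,
      e i * e j * ((1 - Real.exp (-(D i j * t))) * t ^ (-(3/2) : ℝ))) ≤ 0 :=
    setIntegral_nonpos measurableSet_Ioi inner_nonpos
  calc ∑ i, ∑ j, e i * e j * Real.sqrt (D i j)
      = lapC⁻¹ * ∑ i, ∑ j, ∫ t in Ioi (0:ℝ),
          e i * e j * ((1 - Real.exp (-(D i j * t))) * t ^ (-(3/2) : ℝ)) := step1
    _ ≤ 0 := by
        rw [step2]
        exact mul_nonpos_of_nonneg_of_nonpos (inv_nonneg.2 lapC_pos.le) this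

end IntegralAux

section Schoenberg

open Finset Matrix

lemma laplace_nonneg {m : ℕ} {ι : Type*} [Fintype ι] (γ : ℝ) (hγ : 0 ≤ γ)
    (p : Fin m → ι → ℝ) (c : Fin m → ℝ) :
    0 ≤ ∑ i, ∑ j, c i * c j * Real.exp (-γ * Real.sqrt (∑ k, (p i k - p j k) ^ 2)) := by
  classical
  rcases Nat.eq_zero_or_pos m with hm | hm
  · subst hm; simp
  set i0 : Fin m := ⟨0, hm⟩ with hi0
  set d : Fin m → Fin m → ℝ := fun i j => Real.sqrt (∑ k, (p i k - p j k) ^ 2) with hd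
  have hd_symm : ∀ i j, d i j = d j i := by
    intro i j
    simp only [hd]
    congr 1
    exact Finset.sum_congr rfl fun k _ => by ring
  have hd_self : ∀ i, d i i = 0 := by
    intro i; simp [hd]
  set K : Fin m → Fin m → ℝ := fun i j => γ * (d i i0 + d j i0 - d i j) with hK
  -- K is a positive semidefinite kernel
  have hKpsd : ∀ c' : Fin m → ℝ, 0 ≤ ∑ i, ∑ j, c' i * c' j * K i j := by
    intro c'
    set s : ℝ := ∑ i, c' i with hs
    set T1 : ℝ := ∑ i, ∑ j, c' i * c' j * d i j with hT1
    set T2 : ℝ := ∑ i, c' i * d i i0 with hT2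
    set e : Fin m → ℝ := fun i => c' i - (if i = i0 then s else 0) with he
    have hesum : ∑ i, e i = 0 := by
      simp only [he]
      rw [Finset.sum_sub_distrib, Finset.sum_ite_eq' univ i0 (fun _ => s)]
      simp [hs]
    have hnd' : ∑ i, ∑ j, e i * e j * d i j ≤ 0 := dist_neg_def p e hesum
    have hA : ∀ X : Fin m → ℝ, ∑ i, (if i = i0 then s else 0) * X i = s * X i0 := by
      intro X
      have : ∀ i : Fin m, (if i = i0 then s else 0) * X i
          = if i = i0 then s * X i else 0 := by
        intro i; split <;> simp
      simp_rw [this]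
      rw [Finset.sum_ite_eq' univ i0 (fun i => s * X i)]
      simp
    have expand : ∑ i, ∑ j, e i * e j * d i j = T1 - 2 * s * T2 := by
      have h1 : ∀ i j : Fin m, e i * e j * d i j
          = c' i * c' j * d i j
            - (if i = i0 then s else 0) * (c' j * d i j)
            - (if j = i0 then s else 0) * (c' i * d i j)
            + (if i = i0 then s else 0) * ((if j = i0 then s else 0) * d i j) := by
        intro i j; simp only [he]; ring
      simp_rw [h1, Finset.sum_add_distrib, Finset.sum_sub_distrib]
      have e1 : ∑ i, ∑ j, (if i = i0 then s else 0) * (c' j * d i j) = s * T2 := by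
        have h2 : ∀ i : Fin m, ∑ j, (if i = i0 then s else 0) * (c' j * d i j)
            = (if i = i0 then s else 0) * (∑ j, c' j * d i j) := fun i =>
          (Finset.mul_sum _ _ _).symm
        simp_rw [h2]
        rw [hA (fun i => ∑ j, c' j * d i j)]
        congr 1
        exact Finset.sum_congr rfl fun j _ => by rw [hd_symm i0 j]
      have e2 : ∑ i, ∑ j, (if j = i0 then s else 0) * (c' i * d i j) = s * T2 := by
        have h2 : ∀ i : Fin m, ∑ j, (if j = i0 then s else 0) * (c' i * d i j)
            = c' i * d i i0 * s := by
          intro i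
          rw [hA (fun j => c' i * d i j)]
          ring
        simp_rw [h2]
        rw [← Finset.sum_mul, ← hT2]
        ring
      have e3 : ∑ i, ∑ j, (if i = i0 then s else 0) * ((if j = i0 then s else 0) * d i j)
          = 0 := by
        have h2 : ∀ i : Fin m, ∑ j, (if i = i0 then s else 0) * ((if j = i0 then s else 0) * d i j)
            = (if i = i0 then s else 0) * (s * d i i0) := by
          intro i
          rw [← Finset.mul_sum, hA (fun j => d i j)]
        simp_rw [h2]
        rw [hA (fun i => s * d i i0), hd_self i0]
        ring
      rw [e1, e2, e3, ← hT1]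
      ring
    have expandK : ∑ i, ∑ j, c' i * c' j * K i j = γ * (2 * s * T2 - T1) := by
      have h1 : ∀ i : Fin m, ∑ j, c' i * c' j * K i j
          = γ * (c' i * d i i0 * s + c' i * (∑ j, c' j * d j i0) - c' i * ∑ j, c' j * d i j) := by
        intro i
        have h2 : ∀ j : Fin m, c' i * c' j * K i j
            = γ * (c' i * d i i0 * c' j + c' i * (c' j * d j i0) - c' i * (c' j * d i j)) := by
          intro j; simp only [hK]; ring
        calc ∑ j, c' i * c' j * K i j
            = ∑ j, γ * (c' i * d i i0 * c' j + c' i * (c' j * d j i0)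
                - c' i * (c' j * d i j)) := Finset.sum_congr rfl fun j _ => h2 j
          _ = γ * ∑ j, (c' i * d i i0 * c' j + c' i * (c' j * d j i0)
                - c' i * (c' j * d i j)) := (Finset.mul_sum _ _ _).symm
          _ = γ * ((∑ j, c' i * d i i0 * c' j) + (∑ j, c' i * (c' j * d j i0))
                - ∑ j, c' i * (c' j * d i j)) := by
              rw [Finset.sum_sub_distrib, Finset.sum_add_distrib]
          _ = γ * (c' i * d i i0 * s + c' i * (∑ j, c' j * d j i0)
                - c' i * ∑ j, c' j * d i j) := by
              rw [← Finset.mul_sum, ← Finset.mul_sum, ← Finset.mul_sum, ← hs]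
      have g1 : ∑ i, c' i * d i i0 * s = s * T2 := by rw [← Finset.sum_mul, ← hT2]; ring
      have g2 : ∑ i, c' i * (∑ j, c' j * d j i0) = s * T2 := by
        rw [← Finset.sum_mul, ← hs, ← hT2]
      have g3 : ∑ i, c' i * ∑ j, c' j * d i j = T1 := by
        rw [hT1]
        refine Finset.sum_congr rfl fun i _ => ?_
        rw [Finset.mul_sum]
        exact Finset.sum_congr rfl fun j _ => by ring
      calc ∑ i, ∑ j, c' i * c' j * K i j
          = ∑ i, γ * (c' i * d i i0 * s + c' i * (∑ j, c' j * d j i0)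
              - c' i * ∑ j, c' j * d i j) := Finset.sum_congr rfl fun i _ => h1 i
        _ = γ * ∑ i, (c' i * d i i0 * s + c' i * (∑ j, c' j * d j i0)
              - c' i * ∑ j, c' j * d i j) := (Finset.mul_sum _ _ _).symm
        _ = γ * ((∑ i, c' i * d i i0 * s) + (∑ i, c' i * (∑ j, c' j * d j i0))
              - ∑ i, c' i * ∑ j, c' j * d i j) := by
            rw [Finset.sum_sub_distrib, Finset.sum_add_distrib]
        _ = γ * (2 * s * T2 - T1) := by rw [g1, g2, g3]; ring
    rw [expandK]
    have hfin : 0 ≤ 2 * s * T2 - T1 := by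
      have := expand ▸ hnd'
      linarith
    exact mul_nonneg hγ hfin
  -- factor K through a matrix square root
  have hM : (Matrix.of K).PosSemidef := by
    rw [posSemidef_iff_dotProduct_mulVec]
    constructor
    · ext i j
      simp only [conjTranspose_apply, Matrix.of_apply, star_trivial]
      simp only [hK]
      rw [hd_symm j i, hd_symm j i0]
      ring
    · intro x
      have hdp : dotProduct (star x) ((Matrix.of K) *ᵥ x)
          = ∑ i, ∑ j, x i * x j * K i j := by
        simp only [dotProduct, mulVec, star_trivial, Matrix.of_apply, Pi.star_apply]
        refine Finset.sum_congr rfl fun i _ => ?_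
        rw [Finset.mul_sum]
        exact Finset.sum_congr rfl fun j _ => by ring
      rw [hdp]
      exact hKpsd x
  obtain ⟨m', B, hB⟩ := Matrix.posSemidef_iff_eq_sum_vecMulVec.mp hM
  have hKfact : ∀ i j : Fin m, K i j = ∑ k, B k i * B k j := by
    intro i j
    have h0 : (Matrix.of K) i j = (∑ k, vecMulVec (B k) (star (B k))) i j := by rw [hB]
    simpa [Matrix.sum_apply, Matrix.vecMulVec_apply] using h0
  set b : Fin m → ℝ := fun i => c i * Real.exp (-γ * d i i0) with hb
  have hbdef : ∀ i, b i = c i * Real.exp (-γ * d i i0) := fun i => rfl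
  have key : ∀ i j : Fin m, c i * c j * Real.exp (-γ * d i j)
      = b i * b j * Real.exp (∑ k, B k i * B k j) := by
    intro i j
    have h1 : -γ * d i j = (-γ * d i i0) + (-γ * d j i0) + K i j := by
      simp only [hK]; ring
    rw [h1, Real.exp_add, Real.exp_add, ← hKfact i j, hbdef i, hbdef j, hKfact i j]
    ring
  have hEq : ∑ i, ∑ j, c i * c j * Real.exp (-γ * d i j)
      = ∑ i, ∑ j, b i * b j * Real.exp (∑ k, B k i * B k j) :=
    Finset.sum_congr rfl fun i _ => Finset.sum_congr rfl fun j _ => key i j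
  calc (0:ℝ) ≤ ∑ i, ∑ j, b i * b j * Real.exp (∑ k, B k i * B k j) :=
        gram_exp_nonneg (fun i k => B k i) b
    _ = ∑ i, ∑ j, c i * c j * Real.exp (-γ * d i j) := hEq.symm

end Schoenberg

section Main

open Finset

lemma frobNormSq_eq_sum {r : ℕ} (M : Matrix (Fin r) (Fin r) ℝ) :
    frobNormSq M = ∑ k : Fin r × Fin r, (M k.1 k.2) ^ 2 := by
  rw [frobNormSq, Matrix.trace]
  simp only [Matrix.diag_apply, Matrix.mul_apply, Matrix.transpose_apply]
  rw [Fintype.sum_prod_type, Finset.sum_comm]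
  exact Finset.sum_congr rfl fun j _ => Finset.sum_congr rfl fun i _ => by simp [sq]

/-- Let `mlog` be the (symmetric) matrix logarithm, a bijection from
`Sym⁺(r)` onto `Sym(r)`. The log-Euclidean distance
`d_log(A,B) = ‖log A - log B‖_F` is a metric on `Sym⁺(r)` (nonnegative, zero iff equal,
symmetric, triangle inequality), and for every `γ > 0` the kernels
`exp(-γ d_log(A,B)²)` and `exp(-γ d_log(A,B))` are positive definite on `Sym⁺(r)`. -/
theorem logEuclidean_metric_and_kernels_posdef (r : ℕ)
    (mlog : {A : Matrix (Fin r) (Fin r) ℝ // A.IsSymm ∧ A.PosDef} → Matrix (Fin r) (Fin r) ℝ)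
    (hsymm : ∀ A, (mlog A).IsSymm)
    (hinj : Function.Injective mlog)
    (hsurj : ∀ L : Matrix (Fin r) (Fin r) ℝ, L.IsSymm → ∃ A, mlog A = L)
    (dlog : {A : Matrix (Fin r) (Fin r) ℝ // A.IsSymm ∧ A.PosDef} →
      {A : Matrix (Fin r) (Fin r) ℝ // A.IsSymm ∧ A.PosDef} → ℝ)
    (hdlog : ∀ A B, dlog A B = Real.sqrt (frobNormSq (mlog A - mlog B))) :
    (∀ A B, 0 ≤ dlog A B) ∧
    (∀ A B, dlog A B = 0 ↔ A = B) ∧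
    (∀ A B, dlog A B = dlog B A) ∧
    (∀ A B C, dlog A C ≤ dlog A B + dlog B C) ∧
    ∀ γ : ℝ, 0 < γ →
      ∀ (m : ℕ) (Y : Fin m → {A : Matrix (Fin r) (Fin r) ℝ // A.IsSymm ∧ A.PosDef})
        (c : Fin m → ℝ),
        0 ≤ ∑ i, ∑ j, c i * c j * Real.exp (-γ * dlog (Y i) (Y j) ^ 2) ∧
        0 ≤ ∑ i, ∑ j, c i * c j * Real.exp (-γ * dlog (Y i) (Y j)) := by
  classical
  -- reformulate dlog in entrywise terms
  have hd' : ∀ A B, dlog A B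
      = Real.sqrt (∑ k : Fin r × Fin r, (mlog A k.1 k.2 - mlog B k.1 k.2) ^ 2) := by
    intro A B
    rw [hdlog, frobNormSq_eq_sum]
    congr 1
  -- the Euclidean embedding
  set v : Matrix (Fin r) (Fin r) ℝ → EuclideanSpace ℝ (Fin r × Fin r) :=
    fun M => (WithLp.equiv 2 ((Fin r × Fin r) → ℝ)).symm (fun k => M k.1 k.2) with hv
  have hdist : ∀ A B, dlog A B = dist (v (mlog A)) (v (mlog B)) := by
    intro A B
    rw [hd', EuclideanSpace.dist_eq]
    congr 1
    refine Finset.sum_congr rfl fun k _ => ?_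
    rw [Real.dist_eq, sq_abs]
    rfl
  refine ⟨?_, ?_, ?_, ?_, ?_⟩
  · intro A B; rw [hdlog]; exact Real.sqrt_nonneg _
  · intro A B
    constructor
    · intro h
      rw [hd'] at h
      have hnn : ∀ k ∈ (Finset.univ : Finset (Fin r × Fin r)),
          0 ≤ (mlog A k.1 k.2 - mlog B k.1 k.2) ^ 2 := fun k _ => sq_nonneg _
      have hsum0 : ∑ k : Fin r × Fin r, (mlog A k.1 k.2 - mlog B k.1 k.2) ^ 2 = 0 := by
        have := Real.sqrt_eq_zero (Finset.sum_nonneg hnn) |>.mp h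
        exact this
      have hzero := (Finset.sum_eq_zero_iff_of_nonneg hnn).mp hsum0
      have hmat : mlog A = mlog B := by
        ext i j
        have := hzero (i, j) (Finset.mem_univ _)
        have h2 : mlog A i j - mlog B i j = 0 := by
          exact pow_eq_zero_iff (n := 2) (by norm_num) |>.mp this
        linarith
      exact hinj hmat
    · intro h
      subst h
      rw [hd']
      simp
  · intro A B
    rw [hd', hd']
    congr 1
    exact Finset.sum_congr rfl fun k _ => by ring
  · intro A B C
    rw [hdist, hdist, hdist]
    exact dist_triangle _ _ _
  · intro γ hγ m Y c
    set p : Fin m → (Fin r × Fin r) → ℝ := fun i k => mlog (Y i) k.1 k.2 with hp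
    have hdp : ∀ i j, dlog (Y i) (Y j) = Real.sqrt (∑ k, (p i k - p j k) ^ 2) :=
      fun i j => hd' (Y i) (Y j)
    constructor
    · have hsq : ∀ i j, dlog (Y i) (Y j) ^ 2 = ∑ k, (p i k - p j k) ^ 2 := by
        intro i j
        rw [hdp i j, Real.sq_sqrt (Finset.sum_nonneg fun k _ => sq_nonneg _)]
      have := gauss_nonneg γ hγ.le p c
      calc (0:ℝ) ≤ ∑ i, ∑ j, c i * c j * Real.exp (-γ * ∑ k, (p i k - p j k) ^ 2) := this
        _ = ∑ i, ∑ j, c i * c j * Real.exp (-γ * dlog (Y i) (Y j) ^ 2) :=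
          Finset.sum_congr rfl fun i _ => Finset.sum_congr rfl fun j _ => by rw [hsq i j]
    · have := laplace_nonneg γ hγ.le p c
      calc (0:ℝ) ≤ ∑ i, ∑ j, c i * c j
            * Real.exp (-γ * Real.sqrt (∑ k, (p i k - p j k) ^ 2)) := this
        _ = ∑ i, ∑ j, c i * c j * Real.exp (-γ * dlog (Y i) (Y j)) :=
          Finset.sum_congr rfl fun i _ => Finset.sum_congr rfl fun j _ => by rw [hdp i j]

end Main
end

section
/- On the unit sphere S^n = {x ∈ R^{n+1} : ‖x‖ = 1} with geodesic distance d_g(y, y') = arccos(⟨y, y'⟩), the Laplacian-type kernel κ_L(y, y') = exp(-γ d_g(y, y')) is a positive definite kernel for every γ > 0. -/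
open scoped RealInnerProductSpace

set_option maxHeartbeats 1000000

noncomputable section
namespace SphLap
open Real Finset Set Filter


/-- central binomial coefficient over `4^k` -/

def q (k : ℕ) : ℝ := Nat.centralBinom k / 4 ^ k


lemma q_pos (k : ℕ) : 0 < q k := by
  have := k.centralBinom_pos
  have h : (0:ℝ) < Nat.centralBinom k := by exact_mod_cast this
  rw [q]; positivity


lemma q_le_one (k : ℕ) : q k ≤ 1 := by
  rw [q, div_le_one (by positivity)]
  have h : Nat.centralBinom k ≤ 4 ^ k := by
    have h1 : (2*k).choose k ≤ ∑ i ∈ Finset.range (2*k+1), (2*k).choose i :=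
      Finset.single_le_sum (fun i _ => Nat.zero_le _) (by
        simp [Finset.mem_range]; omega)
    have h2 : ∑ i ∈ Finset.range (2*k+1), (2*k).choose i = 2 ^ (2*k) :=
      Nat.sum_range_choose (2*k)
    calc Nat.centralBinom k = (2*k).choose k := rfl
      _ ≤ 2 ^ (2*k) := h1.trans h2.le
      _ = 4 ^ k := by rw [pow_mul]; norm_num
  exact_mod_cast h


lemma q_rec (k : ℕ) : (2*(k:ℝ)+2) * q (k+1) = (2*k+1) * q k := by
  have h := Nat.succ_mul_centralBinom_succ k
  have h' : ((k:ℝ)+1) * (Nat.centralBinom (k+1) : ℝ)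
      = 2*(2*(k:ℝ)+1) * (Nat.centralBinom k : ℝ) := by exact_mod_cast h
  have h4 : (0:ℝ) < 4 ^ k := by positivity
  rw [q, q, pow_succ]
  field_simp
  linear_combination 2 * h'


/-- coefficients of the arcsin power series -/

def ac (k : ℕ) : ℝ := q k / (2*k+1)


lemma ac_nonneg (k : ℕ) : 0 ≤ ac k := by
  have := q_pos k
  have h1 : (0:ℝ) < 2*k+1 := by positivity
  exact le_of_lt (div_pos this h1)


lemma ac_mul : ∀ k : ℕ, ac k * (2*(k:ℝ)+1) = q k := by
  intro k
  have h1 : (2*(k:ℝ)+1) ≠ 0 := by positivity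
  rw [ac]; field_simp


lemma summable_bound_aux {r : ℝ} (hr : |r| < 1) :
    Summable (fun k : ℕ => (2*(k:ℝ)+2) * |r| ^ k) := by
  have h1 : Summable (fun k : ℕ => (k:ℝ)^1 * |r| ^ k) :=
    summable_pow_mul_geometric_of_norm_lt_one 1 (by rwa [Real.norm_eq_abs, abs_abs])
  have h2 : Summable (fun k : ℕ => |r| ^ k) := summable_geometric_of_lt_one (abs_nonneg r) hr
  have := (h1.mul_left 2).add (h2.mul_left 2)
  refine this.congr fun k => ?_
  ring


lemma summable_of_bound {r : ℝ} (hr : |r| < 1) {f : ℕ → ℝ}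
    (hf : ∀ k, |f k| ≤ (2*(k:ℝ)+2) * |r| ^ k) : Summable f :=
  Summable.of_abs (Summable.of_nonneg_of_le (fun k => abs_nonneg _) hf (summable_bound_aux hr))


lemma abs_q (k : ℕ) : |q k| = q k := abs_of_pos (q_pos k)


lemma pow_abs_le {x : ℝ} (hx : |x| ≤ 1) {p k : ℕ} (hpk : k ≤ p) : |x| ^ p ≤ |x| ^ k :=
  pow_le_pow_of_le_one (abs_nonneg x) hx hpk


/-- summability of the main series -/

lemma summable_S {x : ℝ} (hx : |x| < 1) : Summable (fun k : ℕ => q k * x ^ (2*k)) := by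
  refine summable_of_bound hx fun k => ?_
  rw [abs_mul, abs_q, abs_pow]
  calc q k * |x| ^ (2*k) ≤ 1 * |x| ^ k := by
        refine mul_le_mul (q_le_one k) (pow_abs_le hx.le (by omega)) (by positivity) one_pos.le
    _ ≤ (2*(k:ℝ)+2) * |x| ^ k := by
        have : (0:ℝ) ≤ |x| ^ k := by positivity
        nlinarith [Nat.cast_nonneg (α := ℝ) k]


lemma coeff_aux (k : ℕ) : (0:ℝ) ≤ 2*(k:ℝ)+2 := by positivity


lemma le_main {x : ℝ} (hx : |x| ≤ 1) {k : ℕ} {b : ℝ} (hb2 : b ≤ 2*(k:ℝ)+2)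
    {p : ℕ} (hpk : k ≤ p) : b * |x| ^ p ≤ (2*(k:ℝ)+2) * |x| ^ k :=
  mul_le_mul hb2 (pow_abs_le hx hpk) (by positivity) (coeff_aux k)


/-- summability of the derivative series -/

lemma summable_D {x : ℝ} (hx : |x| < 1) :
    Summable (fun k : ℕ => q k * (((2*k : ℕ) : ℝ) * x ^ (2*k-1))) := by
  refine summable_of_bound hx fun k => ?_
  rw [abs_mul, abs_q, abs_mul, abs_pow]
  rcases Nat.eq_zero_or_pos k with rfl | hk
  · simp
  · have h1 : |((2*k : ℕ) : ℝ)| = 2*(k:ℝ) := by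
      rw [abs_of_nonneg (by positivity)]; push_cast; ring
    rw [h1, ← mul_assoc]
    refine le_main hx.le ?_ (by omega)
    have h2 : q k ≤ 1 := q_le_one k
    have h3 : (0:ℝ) ≤ 2*(k:ℝ) := by positivity
    nlinarith [q_pos k]


lemma summable_P {x : ℝ} (hx : |x| < 1) :
    Summable (fun k : ℕ => (2*(k:ℝ)+1) * q k * x ^ (2*k+1)) := by
  refine summable_of_bound hx fun k => ?_
  rw [abs_mul, abs_mul, abs_q, abs_pow]
  rw [abs_of_nonneg (by positivity : (0:ℝ) ≤ 2*(k:ℝ)+1)]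
  refine le_main hx.le ?_ (by omega)
  nlinarith [q_pos k, q_le_one k, Nat.cast_nonneg (α := ℝ) k]


lemma summable_xD {x : ℝ} (hx : |x| < 1) :
    Summable (fun k : ℕ => 2*(k:ℝ) * q k * x ^ (2*k+1)) := by
  refine summable_of_bound hx fun k => ?_
  rw [abs_mul, abs_mul, abs_q, abs_pow]
  rw [abs_of_nonneg (by positivity : (0:ℝ) ≤ 2*(k:ℝ))]
  refine le_main hx.le ?_ (by omega)
  nlinarith [q_pos k, q_le_one k, Nat.cast_nonneg (α := ℝ) k]


lemma summable_A {x : ℝ} (hx : |x| ≤ 1) (hs : Summable ac) :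
    Summable (fun k : ℕ => ac k * x ^ (2*k+1)) := by
  refine Summable.of_abs (Summable.of_nonneg_of_le (fun k => abs_nonneg _) (fun k => ?_) hs)
  rw [abs_mul, abs_of_nonneg (ac_nonneg k), abs_pow]
  calc ac k * |x| ^ (2*k+1) ≤ ac k * 1 := by
        refine mul_le_mul_of_nonneg_left ?_ (ac_nonneg k)
        exact pow_le_one₀ (abs_nonneg x) hx
    _ = ac k := mul_one _


/-- the sum of the series for `(1-x^2)^(-1/2)` -/

def Sf (x : ℝ) : ℝ := ∑' k : ℕ, q k * x ^ (2*k)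


lemma hasDerivAt_Sf {x : ℝ} (hx : |x| < 1) :
    HasDerivAt Sf (∑' k : ℕ, q k * (((2*k : ℕ) : ℝ) * x ^ (2*k-1))) x := by
  set r : ℝ := (1 + |x|)/2 with hr
  have hxr : |x| < r := by rw [hr]; linarith
  have hr0 : 0 < r := lt_of_le_of_lt (abs_nonneg x) hxr
  have hr1 : r < 1 := by rw [hr]; linarith
  have habs : |r| = r := abs_of_pos hr0
  have hu : Summable (fun k : ℕ => q k * (2*(k:ℝ)) * r ^ (2*k-1)) := by
    have := summable_D (x := r) (by rwa [habs])
    refine this.congr fun k => by push_cast; ring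
  show HasDerivAt (fun z => ∑' k : ℕ, q k * z ^ (2*k)) (∑' k : ℕ, q k * (((2*k : ℕ) : ℝ) * x ^ (2*k-1))) x
  refine hasDerivAt_tsum_of_isPreconnected (𝕜 := ℝ) (F := ℝ)
    (g := fun k z => q k * z ^ (2*k)) (g' := fun k z => q k * (((2*k : ℕ) : ℝ) * z ^ (2*k-1))) (y₀ := 0) hu (isOpen_Ioo (a := -r) (b := r))
    (isPreconnected_Ioo) (fun k y _ => ?_) (fun k y hy => ?_) ?_ ?_ ?_
  · exact (hasDerivAt_pow (2*k) y).const_mul (q k)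
  · have hyr : |y| ≤ r := by
      rw [abs_le]; exact ⟨(mem_Ioo.1 hy).1.le, (mem_Ioo.1 hy).2.le⟩
    rw [Real.norm_eq_abs, abs_mul, abs_q, abs_mul, abs_pow]
    have h1 : |((2*k : ℕ) : ℝ)| = 2*(k:ℝ) := by
      rw [abs_of_nonneg (by positivity)]; push_cast; ring
    rw [h1]
    have h2 : |y| ^ (2*k-1) ≤ r ^ (2*k-1) := pow_le_pow_left₀ (abs_nonneg y) hyr _
    have h3 : (0:ℝ) ≤ 2*(k:ℝ) := by positivity
    calc q k * (2*(k:ℝ) * |y| ^ (2*k-1)) = (q k * (2*(k:ℝ))) * |y| ^ (2*k-1) := by ring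
      _ ≤ (q k * (2*(k:ℝ))) * r ^ (2*k-1) :=
          mul_le_mul_of_nonneg_left h2 (mul_nonneg (q_pos k).le h3)
      _ = q k * (2*(k:ℝ)) * r ^ (2*k-1) := by ring
  · exact mem_Ioo.2 ⟨by linarith [neg_lt_of_abs_lt hxr, abs_nonneg x], by linarith [abs_nonneg x]⟩
  · exact summable_S (x := 0) (by simp)
  · exact mem_Ioo.2 ⟨neg_lt_of_abs_lt hxr, lt_of_abs_lt hxr⟩


/-- the derivative series shifted -/

lemma D_shift {x : ℝ} (hx : |x| < 1) :
    (∑' k : ℕ, q k * (((2*k : ℕ) : ℝ) * x ^ (2*k-1)))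
      = ∑' k : ℕ, (2*(k:ℝ)+1) * q k * x ^ (2*k+1) := by
  rw [Summable.tsum_eq_zero_add (summable_D hx)]
  simp only [Nat.mul_zero, Nat.cast_zero, zero_mul, mul_zero, zero_add]
  refine tsum_congr fun k => ?_
  have h1 : 2*(k+1) - 1 = 2*k+1 := by omega
  have h2 : ((2*(k+1) : ℕ) : ℝ) = 2*(k:ℝ)+2 := by push_cast; ring
  rw [h1, h2]
  have h3 := q_rec k
  linear_combination x ^ (2*k+1) * h3


lemma key_identity {x : ℝ} (hx : |x| < 1) :
    (1 - x^2) * (∑' k : ℕ, q k * (((2*k : ℕ) : ℝ) * x ^ (2*k-1))) = x * Sf x := by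
  have hxS : x * Sf x = ∑' k : ℕ, q k * x ^ (2*k+1) := by
    rw [Sf, ← tsum_mul_left]
    exact tsum_congr fun k => by rw [pow_succ]; ring
  have hxD : x^2 * (∑' k : ℕ, q k * (((2*k : ℕ) : ℝ) * x ^ (2*k-1)))
      = ∑' k : ℕ, 2*(k:ℝ) * q k * x ^ (2*k+1) := by
    rw [← tsum_mul_left]
    refine tsum_congr fun k => ?_
    rcases Nat.eq_zero_or_pos k with rfl | hk
    · simp
    · have h1 : 2*k+1 = (2*k-1) + 2 := by omega
      rw [h1, pow_add]
      push_cast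
      ring
  have hD : (∑' k : ℕ, q k * (((2*k : ℕ) : ℝ) * x ^ (2*k-1)))
      = ∑' k : ℕ, (2*(k:ℝ)+1) * q k * x ^ (2*k+1) := D_shift hx
  have hsub : (∑' k : ℕ, (2*(k:ℝ)+1) * q k * x ^ (2*k+1))
      - (∑' k : ℕ, 2*(k:ℝ) * q k * x ^ (2*k+1)) = ∑' k : ℕ, q k * x ^ (2*k+1) := by
    rw [← Summable.tsum_sub (summable_P hx) (summable_xD hx)]
    exact tsum_congr fun k => by ring
  rw [sub_mul, one_mul, hxD, hD, hsub, hxS]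


lemma one_sub_sq_pos {z : ℝ} (hz : |z| < 1) : 0 < 1 - z^2 := by
  nlinarith [sq_abs z, abs_nonneg z]


lemma hasDerivAt_F {z : ℝ} (hz : |z| < 1) :
    HasDerivAt (fun w => Real.sqrt (1 - w^2) * Sf w) 0 z := by
  have h1 : 0 < 1 - z^2 := one_sub_sq_pos hz
  set s : ℝ := Real.sqrt (1 - z^2) with hs
  have hs0 : 0 < s := Real.sqrt_pos.2 h1
  have hss : s * s = 1 - z^2 := Real.mul_self_sqrt h1.le
  have hu : HasDerivAt (fun w : ℝ => 1 - w^2) (0 - 2*z^1) z :=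
    (hasDerivAt_const z (1:ℝ)).sub (hasDerivAt_pow 2 z)
  have hsq : HasDerivAt (fun w : ℝ => Real.sqrt (1 - w^2))
      (1 / (2 * s) * (0 - 2*z^1)) z :=
    (Real.hasDerivAt_sqrt h1.ne').comp z hu
  have hmul := hsq.mul (hasDerivAt_Sf hz)
  have hkey := key_identity hz
  set D : ℝ := ∑' k : ℕ, q k * (((2*k : ℕ) : ℝ) * z ^ (2*k-1)) with hD
  have hval : 1 / (2 * s) * (0 - 2*z^1) * Sf z + s * D = 0 := by
    have hs0' : s ≠ 0 := hs0.ne'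
    field_simp
    linear_combination 2 * D * hss + 2 * hkey
  rw [hval] at hmul
  exact hmul


lemma Sf_zero : Sf 0 = 1 := by
  rw [Sf, tsum_eq_single 0 (fun k hk => by
    rw [zero_pow (by omega : 2*k ≠ 0), mul_zero])]
  simp [q, Nat.centralBinom_zero]


lemma Sf_eq {x : ℝ} (hx : |x| < 1) : Sf x = 1 / Real.sqrt (1 - x^2) := by
  have h1 : 0 < 1 - x^2 := one_sub_sq_pos hx
  have hm : ∀ z : ℝ, |z| < 1 → z ∈ Set.Ioo (-1:ℝ) 1 := fun z hz => mem_Ioo.2 (abs_lt.1 hz)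
  have h := (convex_Ioo (-1:ℝ) 1).norm_image_sub_le_of_norm_hasDerivWithin_le
    (f := fun w => Real.sqrt (1 - w^2) * Sf w) (f' := fun _ => 0) (C := 0)
    (fun z hz => (hasDerivAt_F (by rw [abs_lt]; exact mem_Ioo.1 hz)).hasDerivWithinAt)
    (fun z _ => by simp) (hm 0 (by simp)) (hm x hx)
  have h2 : Real.sqrt (1 - x^2) * Sf x = Real.sqrt (1 - (0:ℝ)^2) * Sf 0 := by
    have := h
    simp only [norm_eq_abs] at this
    have h3 : |Real.sqrt (1 - x^2) * Sf x - Real.sqrt (1 - (0:ℝ)^2) * Sf 0| ≤ 0 := by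
      simpa using this
    have h4 := abs_nonneg (Real.sqrt (1 - x^2) * Sf x - Real.sqrt (1 - (0:ℝ)^2) * Sf 0)
    have h5 : Real.sqrt (1 - x^2) * Sf x - Real.sqrt (1 - (0:ℝ)^2) * Sf 0 = 0 := by
      rw [← abs_eq_zero]; linarith
    linarith [h5]
  have h6 : Real.sqrt (1 - (0:ℝ)^2) = 1 := by norm_num
  rw [Sf_zero, h6, mul_one] at h2
  have hsq : Real.sqrt (1 - x^2) ≠ 0 := (Real.sqrt_pos.2 h1).ne'
  rw [eq_div_iff hsq]
  linarith [h2]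


def Af (x : ℝ) : ℝ := ∑' k : ℕ, ac k * x ^ (2*k+1)


lemma summable_A' {x : ℝ} (hx : |x| < 1) : Summable (fun k : ℕ => ac k * x ^ (2*k+1)) := by
  refine summable_of_bound hx fun k => ?_
  rw [abs_mul, abs_of_nonneg (ac_nonneg k), abs_pow]
  have h1 : ac k ≤ 2*(k:ℝ)+2 := by
    have h2 : ac k * (2*(k:ℝ)+1) = q k := ac_mul k
    have h4 : (0:ℝ) ≤ (k:ℝ) := Nat.cast_nonneg k
    nlinarith [q_le_one k, ac_nonneg k, Nat.cast_nonneg (α := ℝ) k]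
  exact mul_le_mul h1 (pow_abs_le hx.le (by omega)) (by positivity) (by positivity)


lemma hasDerivAt_Af {x : ℝ} (hx : |x| < 1) : HasDerivAt Af (Sf x) x := by
  set r : ℝ := (1 + |x|)/2 with hr
  have hxr : |x| < r := by rw [hr]; linarith
  have hr0 : 0 < r := lt_of_le_of_lt (abs_nonneg x) hxr
  have hr1 : r < 1 := by rw [hr]; linarith
  have habs : |r| = r := abs_of_pos hr0
  have hrlt : |r| < 1 := by rwa [habs]
  have hu : Summable (fun k : ℕ => q k * r ^ (2*k)) := summable_S hrlt
  have hder : HasDerivAt (fun z => ∑' k : ℕ, ac k * z ^ (2*k+1))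
      (∑' k : ℕ, ac k * (((2*k+1 : ℕ) : ℝ) * x ^ (2*k))) x := by
    refine hasDerivAt_tsum_of_isPreconnected (𝕜 := ℝ) (F := ℝ)
      (g := fun k z => ac k * z ^ (2*k+1))
      (g' := fun k z => ac k * (((2*k+1 : ℕ) : ℝ) * z ^ (2*k))) (y₀ := 0) hu
      (isOpen_Ioo (a := -r) (b := r)) isPreconnected_Ioo (fun k y _ => ?_)
      (fun k y hy => ?_) ?_ ?_ ?_
    · have h := (hasDerivAt_pow (2*k+1) y).const_mul (ac k)
      simpa using h
    · have hyr : |y| ≤ r := by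
        rw [abs_le]; exact ⟨(mem_Ioo.1 hy).1.le, (mem_Ioo.1 hy).2.le⟩
      rw [Real.norm_eq_abs, abs_mul, abs_of_nonneg (ac_nonneg k), abs_mul, abs_pow]
      have h1 : |((2*k+1 : ℕ) : ℝ)| = 2*(k:ℝ)+1 := by
        rw [abs_of_nonneg (by positivity)]; push_cast; ring
      rw [h1]
      have h2 : |y| ^ (2*k) ≤ r ^ (2*k) := pow_le_pow_left₀ (abs_nonneg y) hyr _
      have h3 : ac k * (2*(k:ℝ)+1) = q k := ac_mul k
      calc ac k * ((2*(k:ℝ)+1) * |y| ^ (2*k)) = (ac k * (2*(k:ℝ)+1)) * |y| ^ (2*k) := by ring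
        _ = q k * |y| ^ (2*k) := by rw [h3]
        _ ≤ q k * r ^ (2*k) := mul_le_mul_of_nonneg_left h2 (q_pos k).le
    · exact mem_Ioo.2 ⟨by linarith [neg_lt_of_abs_lt hxr, abs_nonneg x], by linarith [abs_nonneg x]⟩
    · exact summable_A' (x := 0) (by simp)
    · exact mem_Ioo.2 ⟨neg_lt_of_abs_lt hxr, lt_of_abs_lt hxr⟩
  have heq : (∑' k : ℕ, ac k * (((2*k+1 : ℕ) : ℝ) * x ^ (2*k))) = Sf x := by
    rw [Sf]
    refine tsum_congr fun k => ?_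
    have h3 : ac k * (2*(k:ℝ)+1) = q k := ac_mul k
    push_cast
    linear_combination x ^ (2*k) * h3
  rw [heq] at hder
  exact hder


lemma Af_zero : Af 0 = 0 := by
  rw [Af]
  have : ∀ k : ℕ, ac k * (0:ℝ) ^ (2*k+1) = 0 := fun k => by
    rw [zero_pow (by omega : 2*k+1 ≠ 0), mul_zero]
  simp only [this, tsum_zero]


lemma Af_eq_arcsin {x : ℝ} (hx : |x| < 1) : Af x = Real.arcsin x := by
  have hG : ∀ z : ℝ, |z| < 1 → HasDerivAt (fun w => Af w - Real.arcsin w) 0 z := by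
    intro z hz
    have h1 := hasDerivAt_Af hz
    have hz1 : z ≠ 1 := fun h => by rw [h] at hz; simp at hz
    have hz2 : z ≠ -1 := fun h => by rw [h] at hz; simp at hz
    have h2 := Real.hasDerivAt_arcsin hz2 hz1
    have h3 := h1.sub h2
    have h4 : Sf z - 1 / Real.sqrt (1 - z^2) = 0 := by rw [Sf_eq hz]; ring
    rwa [h4] at h3
  have hm : ∀ z : ℝ, |z| < 1 → z ∈ Set.Ioo (-1:ℝ) 1 := fun z hz => mem_Ioo.2 (abs_lt.1 hz)
  have h := (convex_Ioo (-1:ℝ) 1).norm_image_sub_le_of_norm_hasDerivWithin_le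
    (f := fun w => Af w - Real.arcsin w) (f' := fun _ => 0) (C := 0)
    (fun z hz => (hG z (by rw [abs_lt]; exact mem_Ioo.1 hz)).hasDerivWithinAt)
    (fun z _ => by simp) (hm 0 (by simp)) (hm x hx)
  simp only [Af_zero, Real.arcsin_zero, sub_zero, norm_eq_abs, sub_zero, zero_mul] at h
  have h5 : |Af x - Real.arcsin x| = 0 := le_antisymm h (abs_nonneg _)
  have h6 := abs_eq_zero.1 h5
  linarith


lemma partial_ac_le (N : ℕ) : ∑ k ∈ Finset.range N, ac k ≤ π/2 := by
    have hlim : Tendsto (fun z : ℝ => ∑ k ∈ Finset.range N, ac k * z ^ (2*k+1))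
        (nhdsWithin 1 (Set.Iio 1)) (nhds (∑ k ∈ Finset.range N, ac k * 1 ^ (2*k+1))) := by
      refine Filter.Tendsto.mono_left ?_ nhdsWithin_le_nhds
      exact (Continuous.tendsto (by continuity) 1)
    have hev : ∀ᶠ z in nhdsWithin (1:ℝ) (Set.Iio 1),
        (∑ k ∈ Finset.range N, ac k * z ^ (2*k+1)) ≤ π/2 := by
      filter_upwards [Ioo_mem_nhdsLT_of_mem (by norm_num : (1:ℝ) ∈ Set.Ioc 0 1)] with z hz
      have hz1 : |z| < 1 := by
        rw [abs_lt]; exact ⟨by linarith [hz.1], hz.2⟩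
      have h1 : ∑ k ∈ Finset.range N, ac k * z ^ (2*k+1) ≤ Af z := by
        refine Summable.sum_le_tsum (Finset.range N) (fun k _ => ?_) (summable_A' hz1)
        exact mul_nonneg (ac_nonneg k) (pow_nonneg hz.1.le _)
      have h2 : Af z = Real.arcsin z := Af_eq_arcsin hz1
      have h3 : Real.arcsin z ≤ π/2 := Real.arcsin_le_pi_div_two z
      linarith
    have := le_of_tendsto hlim hev
    simpa using this


lemma summable_ac : Summable ac :=
  summable_of_sum_range_le ac_nonneg partial_ac_le


lemma tsum_ac : ∑' k, ac k = π/2 := by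
  have hle : ∑' k, ac k ≤ π/2 := Summable.tsum_le_of_sum_range_le summable_ac partial_ac_le
  have hge : π/2 ≤ ∑' k, ac k := by
    have hev : ∀ᶠ z in nhdsWithin (1:ℝ) (Set.Iio 1), Real.arcsin z ≤ ∑' k, ac k := by
      filter_upwards [Ioo_mem_nhdsLT_of_mem (by norm_num : (1:ℝ) ∈ Set.Ioc 0 1)] with z hz
      have hz1 : |z| < 1 := by rw [abs_lt]; exact ⟨by linarith [hz.1], hz.2⟩
      have h1 : Real.arcsin z = Af z := (Af_eq_arcsin hz1).symm
      have h2 : Af z ≤ ∑' k, ac k := by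
        refine Summable.tsum_le_tsum (fun k => ?_) (summable_A' hz1) summable_ac
        calc ac k * z ^ (2*k+1) ≤ ac k * 1 := by
              refine mul_le_mul_of_nonneg_left ?_ (ac_nonneg k)
              refine pow_le_one₀ hz.1.le hz.2.le
          _ = ac k := mul_one _
      linarith
    have hlim : Tendsto Real.arcsin (nhdsWithin 1 (Set.Iio 1)) (nhds (Real.arcsin 1)) :=
      (Real.continuous_arcsin.tendsto 1).mono_left nhdsWithin_le_nhds
    have := le_of_tendsto hlim hev
    rwa [Real.arcsin_one] at this
  linarith


/-- The main analytic result: arcsin power series, valid on all of `[-1,1]`. -/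

lemma hasSum_arcsin {t : ℝ} (ht : |t| ≤ 1) :
    HasSum (fun k : ℕ => ac k * t ^ (2*k+1)) (Real.arcsin t) := by
  rcases lt_or_eq_of_le ht with hlt | heq
  · have h1 := (summable_A' hlt).hasSum
    rwa [show ∑' k : ℕ, ac k * t ^ (2*k+1) = Real.arcsin t from Af_eq_arcsin hlt] at h1
  · rcases (abs_eq (by norm_num : (0:ℝ) ≤ 1)).1 heq with h1 | h1
    · subst h1
      have h2 : HasSum ac (π/2) := by
        have := summable_ac.hasSum
        rwa [tsum_ac] at this
      rw [Real.arcsin_one]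
      simpa using h2
    · subst h1
      have h2 : HasSum ac (π/2) := by
        have := summable_ac.hasSum
        rwa [tsum_ac] at this
      have h3 := h2.neg
      rw [show Real.arcsin (-1) = -(π/2) by rw [Real.arcsin_neg, Real.arcsin_one]]
      have h4 : (fun k : ℕ => ac k * (-1:ℝ) ^ (2*k+1)) = fun k => -ac k := by
        funext k
        rw [show ((-1:ℝ)) ^ (2*k+1) = -1 from Odd.neg_one_pow ⟨k, by ring⟩]
        ring
      rw [h4]
      exact h3


def Rep {m : ℕ} (A : Fin m → Fin m → ℝ) : Prop :=
  ∃ w : Fin m → ℕ → ℝ,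
    (∀ i j : Fin m, Summable fun x => |w i x * w j x|) ∧
    ∀ i j : Fin m, HasSum (fun x => w i x * w j x) (A i j)


lemma rep_nonneg {m : ℕ} {A : Fin m → Fin m → ℝ} (hA : Rep A) (c : Fin m → ℝ) :
    0 ≤ ∑ i, ∑ j, c i * c j * A i j := by
  obtain ⟨w, -, hw⟩ := hA
  have h1 : HasSum (fun x => ∑ i, ∑ j, c i * c j * (w i x * w j x))
      (∑ i, ∑ j, c i * c j * A i j) := by
    refine hasSum_sum fun i _ => hasSum_sum fun j _ => ?_
    exact (hw i j).mul_left (c i * c j)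
  have h2 : ∀ x, ∑ i, ∑ j, c i * c j * (w i x * w j x) = (∑ i, c i * w i x)^2 := by
    intro x
    rw [sq, Finset.sum_mul_sum]
    exact Finset.sum_congr rfl fun i _ => Finset.sum_congr rfl fun j _ => by ring
  refine h1.nonneg fun x => ?_
  rw [h2 x]
  positivity


lemma rep_one {m : ℕ} : Rep (fun _ _ : Fin m => (1:ℝ)) := by
  refine ⟨fun _ x => if x = 0 then 1 else 0, fun i j => ?_, fun i j => ?_⟩
  · refine summable_of_ne_finset_zero (s := {0}) fun x hx => ?_
    simp only [Finset.mem_singleton] at hx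
    simp [hx]
  · have h : (fun x : ℕ => (if x = 0 then (1:ℝ) else 0) * (if x = 0 then (1:ℝ) else 0))
        = fun x : ℕ => if x = 0 then (1:ℝ) else 0 := by
      funext x; split <;> simp
    rw [h]
    exact hasSum_ite_eq 0 1


lemma rep_mul {m : ℕ} {A B : Fin m → Fin m → ℝ} (hA : Rep A) (hB : Rep B) :
    Rep (fun i j => A i j * B i j) := by
  obtain ⟨w, hw1, hw2⟩ := hA
  obtain ⟨v, hv1, hv2⟩ := hB
  obtain ⟨e⟩ : Nonempty (ℕ ≃ ℕ × ℕ) := ⟨(Denumerable.eqv (ℕ × ℕ)).symm⟩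
  refine ⟨fun i x => w i (e x).1 * v i (e x).2, fun i j => ?_, fun i j => ?_⟩
  · have hs : Summable (fun p : ℕ × ℕ => |w i p.1 * w j p.1| * |v i p.2 * v j p.2|) :=
      (hw1 i j).mul_of_nonneg (hv1 i j) (fun x => abs_nonneg _) (fun x => abs_nonneg _)
    have hs2 := (e.summable_iff (f := fun p : ℕ × ℕ =>
        |w i p.1 * w j p.1| * |v i p.2 * v j p.2|)).2 hs
    refine hs2.congr fun x => ?_
    simp only [Function.comp_apply]
    rw [← abs_mul]
    congr 1
    ring
  · have hsf : Summable (fun p : ℕ × ℕ => (w i p.1 * w j p.1) * (v i p.2 * v j p.2)) := by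
      have hs : Summable (fun p : ℕ × ℕ => |w i p.1 * w j p.1| * |v i p.2 * v j p.2|) :=
        (hw1 i j).mul_of_nonneg (hv1 i j) (fun x => abs_nonneg _) (fun x => abs_nonneg _)
      have hs' : Summable (fun p : ℕ × ℕ => |(w i p.1 * w j p.1) * (v i p.2 * v j p.2)|) :=
        hs.congr fun p => (abs_mul _ _).symm
      exact hs'.of_abs
    have h := (hw2 i j).mul (hv2 i j) hsf
    have h2 := (e.hasSum_iff (f := fun p : ℕ × ℕ =>
        (w i p.1 * w j p.1) * (v i p.2 * v j p.2)) (a := A i j * B i j)).2 h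
    have h3 : (fun x : ℕ => (w i (e x).1 * v i (e x).2) * (w j (e x).1 * v j (e x).2))
        = fun x : ℕ => ((w i (e x).1 * w j (e x).1) * (v i (e x).2 * v j (e x).2)) := by
      funext x; ring
    rw [h3]
    exact h2


/-- Nonnegative countable combinations of representable matrices are representable. -/

lemma rep_tsum {m : ℕ} {A : ℕ → Fin m → Fin m → ℝ} {lam : ℕ → ℝ} {C : Fin m → Fin m → ℝ}
    (hA : ∀ k, Rep (A k)) (hlam : ∀ k, 0 ≤ lam k)
    (hdiag : ∀ i, Summable fun k => lam k * A k i i)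
    (hC : ∀ i j, HasSum (fun k => lam k * A k i j) (C i j)) : Rep C := by
  choose w hw1 hw2 using hA
  obtain ⟨e⟩ : Nonempty (ℕ ≃ ℕ × ℕ) := ⟨(Denumerable.eqv (ℕ × ℕ)).symm⟩
  -- the diagonal square sums
  have hsq : ∀ (k : ℕ) (i : Fin m), Summable (fun (x : ℕ) => lam k * (w k i x * w k i x)) :=
    fun k i => ((hw2 k i i).summable).mul_left (lam k)
  have hsqsum : ∀ (k : ℕ) (i : Fin m),
      ∑' x : ℕ, lam k * (w k i x * w k i x) = lam k * A k i i := by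
    intro k i
    rw [tsum_mul_left, (hw2 k i i).tsum_eq]
  have hsq_nonneg : ∀ (k : ℕ) (i : Fin m) (x : ℕ), 0 ≤ lam k * (w k i x * w k i x) :=
    fun k i x => mul_nonneg (hlam k) (mul_self_nonneg _)
  -- summability of the diagonal double families
  have hH : ∀ i : Fin m, Summable (fun p : ℕ × ℕ => lam p.1 * (w p.1 i p.2 * w p.1 i p.2)) := by
    intro i
    refine (summable_prod_of_nonneg (fun p => hsq_nonneg p.1 i p.2)).2 ⟨fun k => hsq k i, ?_⟩
    refine ((hdiag i).congr fun k => ?_).congr fun k => rfl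
    exact (hsqsum k i).symm
  -- absolute summability of the mixed double family
  have hGabs : ∀ i j : Fin m,
      Summable (fun p : ℕ × ℕ => |lam p.1 * (w p.1 i p.2 * w p.1 j p.2)|) := by
    intro i j
    have hb := ((hH i).add (hH j)).mul_left (1/2 : ℝ)
    refine Summable.of_nonneg_of_le (fun p => abs_nonneg _) (fun p => ?_) hb
    have h1 : |lam p.1 * (w p.1 i p.2 * w p.1 j p.2)|
        = lam p.1 * |w p.1 i p.2 * w p.1 j p.2| := by
      rw [abs_mul, abs_of_nonneg (hlam p.1)]
    rw [h1]
    have h2 : |w p.1 i p.2 * w p.1 j p.2|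
        ≤ 1/2 * (w p.1 i p.2 * w p.1 i p.2 + w p.1 j p.2 * w p.1 j p.2) := by
      rw [abs_mul]
      nlinarith [abs_nonneg (w p.1 i p.2), abs_nonneg (w p.1 j p.2),
        sq_abs (w p.1 i p.2), sq_abs (w p.1 j p.2),
        sq_nonneg (|w p.1 i p.2| - |w p.1 j p.2|)]
    calc lam p.1 * |w p.1 i p.2 * w p.1 j p.2|
        ≤ lam p.1 * (1/2 * (w p.1 i p.2 * w p.1 i p.2 + w p.1 j p.2 * w p.1 j p.2)) :=
          mul_le_mul_of_nonneg_left h2 (hlam p.1)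
      _ = 1/2 * (lam p.1 * (w p.1 i p.2 * w p.1 i p.2) + lam p.1 * (w p.1 j p.2 * w p.1 j p.2)) :=
          by ring
  have hG : ∀ i j : Fin m,
      HasSum (fun p : ℕ × ℕ => lam p.1 * (w p.1 i p.2 * w p.1 j p.2)) (C i j) := by
    intro i j
    have hs : Summable (fun p : ℕ × ℕ => lam p.1 * (w p.1 i p.2 * w p.1 j p.2)) :=
      (hGabs i j).of_abs
    have hfib : ∀ k : ℕ, HasSum (fun x : ℕ => lam k * (w k i x * w k j x)) (lam k * A k i j) :=
      fun k => (hw2 k i j).mul_left (lam k)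
    have h1 := hs.hasSum
    have h2 := h1.prod_fiberwise hfib
    have h3 := (hC i j).unique h2
    rwa [← h3] at h1
  -- now build the combined representation
  refine ⟨fun i x => Real.sqrt (lam (e x).1) * w (e x).1 i (e x).2, fun i j => ?_, fun i j => ?_⟩
  · have := (e.summable_iff (f := fun p : ℕ × ℕ =>
        |lam p.1 * (w p.1 i p.2 * w p.1 j p.2)|)).2 (hGabs i j)
    refine this.congr fun x => ?_
    simp only [Function.comp_apply]
    congr 1
    have hs := Real.mul_self_sqrt (hlam (e x).1)
    linear_combination (-(w (e x).1 i (e x).2 * w (e x).1 j (e x).2)) * hs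
  · have := (e.hasSum_iff (f := fun p : ℕ × ℕ =>
        lam p.1 * (w p.1 i p.2 * w p.1 j p.2)) (a := C i j)).2 (hG i j)
    have h3 : (fun x : ℕ => (Real.sqrt (lam (e x).1) * w (e x).1 i (e x).2)
          * (Real.sqrt (lam (e x).1) * w (e x).1 j (e x).2))
        = fun x : ℕ => lam (e x).1 * (w (e x).1 i (e x).2 * w (e x).1 j (e x).2) := by
      funext x
      have hs := Real.mul_self_sqrt (hlam (e x).1)
      linear_combination (w (e x).1 i (e x).2 * w (e x).1 j (e x).2) * hs
    rw [h3]
    exact this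


lemma rep_pow {m : ℕ} {A : Fin m → Fin m → ℝ} (hA : Rep A) (p : ℕ) :
    Rep (fun i j => A i j ^ p) := by
  induction p with
  | zero => simpa using rep_one (m := m)
  | succ p ih =>
      have := rep_mul ih hA
      refine this.imp fun w hw => ⟨hw.1, fun i j => ?_⟩
      have h := hw.2 i j
      simpa [pow_succ] using h


/-- The Gram matrix of points on the sphere is representable. -/

lemma rep_gram {n m : ℕ} (y : Fin m → Metric.sphere (0 : EuclideanSpace ℝ (Fin (n + 1))) 1) :
    Rep (fun i j => ⟪(y i : EuclideanSpace ℝ (Fin (n + 1))), (y j : EuclideanSpace ℝ (Fin (n + 1)))⟫) := by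
  refine ⟨fun i x => if h : x < n + 1 then (y i : EuclideanSpace ℝ (Fin (n + 1))) ⟨x, h⟩ else 0,
    fun i j => ?_, fun i j => ?_⟩
  · refine summable_of_ne_finset_zero (s := Finset.range (n+1)) fun x hx => ?_
    rw [Finset.mem_range] at hx
    simp [hx]
  · have h0 : ∀ x ∉ Finset.range (n+1),
        (fun x => (if h : x < n + 1 then (y i : EuclideanSpace ℝ (Fin (n + 1))) ⟨x, h⟩ else 0)
          * (if h : x < n + 1 then (y j : EuclideanSpace ℝ (Fin (n + 1))) ⟨x, h⟩ else 0)) x = 0 := by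
      intro x hx
      rw [Finset.mem_range] at hx
      simp [hx]
    have h1 := hasSum_sum_of_ne_finset_zero (L := SummationFilter.unconditional ℕ) h0
    have h2 : (∑ b ∈ Finset.range (n+1),
        (fun x => (if h : x < n + 1 then (y i : EuclideanSpace ℝ (Fin (n + 1))) ⟨x, h⟩ else 0)
          * (if h : x < n + 1 then (y j : EuclideanSpace ℝ (Fin (n + 1))) ⟨x, h⟩ else 0)) b)
        = ⟪(y i : EuclideanSpace ℝ (Fin (n + 1))), (y j : EuclideanSpace ℝ (Fin (n + 1)))⟫ := by
      rw [Finset.sum_range, PiLp.inner_apply]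
      refine Finset.sum_congr rfl fun p _ => ?_
      rw [dif_pos p.isLt]
      simp [RCLike.inner_apply, starRingEnd_apply, Nat.le_of_lt_succ p.isLt, mul_comm]
    rw [h2] at h1
    exact h1


lemma norm_coe_sphere {n : ℕ} (z : Metric.sphere (0 : EuclideanSpace ℝ (Fin (n + 1))) 1) :
    ‖(z : EuclideanSpace ℝ (Fin (n + 1)))‖ = 1 := by
  have hz := z.2
  rwa [Metric.mem_sphere, dist_zero_right] at hz


lemma rep_arcsin {m : ℕ} {T : Fin m → Fin m → ℝ} (hT : Rep T) (hb : ∀ i j, |T i j| ≤ 1) :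
    Rep (fun i j => Real.arcsin (T i j)) := by
  refine rep_tsum (A := fun k i j => T i j ^ (2*k+1)) (lam := ac)
    (fun k => rep_pow hT (2*k+1)) ac_nonneg (fun i => ?_) (fun i j => hasSum_arcsin (hb i j))
  refine Summable.of_abs (Summable.of_nonneg_of_le (fun k => abs_nonneg _)
    (fun k => ?_) summable_ac)
  rw [abs_mul, abs_of_nonneg (ac_nonneg k), abs_pow]
  calc ac k * |T i i| ^ (2*k+1) ≤ ac k * 1 := by
        refine mul_le_mul_of_nonneg_left ?_ (ac_nonneg k)
        exact pow_le_one₀ (abs_nonneg _) (hb i i)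
    _ = ac k := mul_one _


lemma rep_exp {m : ℕ} {T : Fin m → Fin m → ℝ} (hT : Rep T) {γ : ℝ} (hγ : 0 ≤ γ) :
    Rep (fun i j => Real.exp (γ * T i j)) := by
  refine rep_tsum (A := fun k i j => T i j ^ k) (lam := fun k => γ ^ k / (Nat.factorial k))
    (fun k => rep_pow hT k) (fun k => by positivity) (fun i => ?_) (fun i j => ?_)
  · refine (Real.summable_pow_div_factorial (γ * T i i)).congr fun k => ?_
    rw [mul_pow]
    ring
  · have h := NormedSpace.expSeries_div_hasSum_exp (γ * T i j)
    rw [← Real.exp_eq_exp_ℝ] at h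
    have hfun : (fun k : ℕ => γ ^ k / (Nat.factorial k) * T i j ^ k)
        = fun k : ℕ => (γ * T i j) ^ k / (Nat.factorial k) := by
      funext k
      rw [mul_pow]
      ring
    rw [hfun]
    exact h


end SphLap
end

/-- Proposition 4. On the unit sphere `S^n ⊆ ℝ^{n+1}` with geodesic
distance `d_g(y,y') = arccos⟪y,y'⟫`, the Laplacian-type kernel
`κ_L(y,y') = exp(-γ d_g(y,y'))` is positive definite for every `γ > 0`: it is symmetric
and all its finite quadratic forms are nonnegative. -/
theorem sphere_laplacian_kernel_posdef (n : ℕ) (γ : ℝ) (hγ : 0 < γ) :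
    (∀ y y' : Metric.sphere (0 : EuclideanSpace ℝ (Fin (n + 1))) 1,
        Real.exp (-γ * Real.arccos ⟪(y : EuclideanSpace ℝ (Fin (n + 1))), (y' : EuclideanSpace ℝ (Fin (n + 1)))⟫)
          = Real.exp (-γ * Real.arccos ⟪(y' : EuclideanSpace ℝ (Fin (n + 1))), (y : EuclideanSpace ℝ (Fin (n + 1)))⟫)) ∧
      ∀ (m : ℕ) (y : Fin m → Metric.sphere (0 : EuclideanSpace ℝ (Fin (n + 1))) 1)
        (c : Fin m → ℝ),
        0 ≤ ∑ i, ∑ j, c i * c j *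
          Real.exp (-γ * Real.arccos ⟪(y i : EuclideanSpace ℝ (Fin (n + 1))), (y j : EuclideanSpace ℝ (Fin (n + 1)))⟫) := by
  constructor
  · intro y y'
    rw [real_inner_comm]
  · intro m y c
    have hT : SphLap.Rep (fun i j =>
        ⟪(y i : EuclideanSpace ℝ (Fin (n + 1))), (y j : EuclideanSpace ℝ (Fin (n + 1)))⟫) :=
      SphLap.rep_gram y
    have hb : ∀ i j, |⟪(y i : EuclideanSpace ℝ (Fin (n + 1))), (y j : EuclideanSpace ℝ (Fin (n + 1)))⟫| ≤ 1 := by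
      intro i j
      have h := abs_real_inner_le_norm (y i : EuclideanSpace ℝ (Fin (n + 1)))
        (y j : EuclideanSpace ℝ (Fin (n + 1)))
      rwa [SphLap.norm_coe_sphere, SphLap.norm_coe_sphere, mul_one] at h
    have hArc := SphLap.rep_arcsin hT hb
    have hExp := SphLap.rep_exp hArc hγ.le
    have hQ := SphLap.rep_nonneg hExp c
    have hterm : ∀ i j : Fin m, c i * c j *
        Real.exp (-γ * Real.arccos ⟪(y i : EuclideanSpace ℝ (Fin (n + 1))), (y j : EuclideanSpace ℝ (Fin (n + 1)))⟫)
        = Real.exp (-(γ * Real.pi / 2)) * (c i * c j *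
          Real.exp (γ * Real.arcsin ⟪(y i : EuclideanSpace ℝ (Fin (n + 1))), (y j : EuclideanSpace ℝ (Fin (n + 1)))⟫)) := by
      intro i j
      rw [Real.arccos_eq_pi_div_two_sub_arcsin]
      rw [show -γ * (Real.pi/2 - Real.arcsin ⟪(y i : EuclideanSpace ℝ (Fin (n + 1))), (y j : EuclideanSpace ℝ (Fin (n + 1)))⟫)
          = -(γ * Real.pi / 2) + γ * Real.arcsin ⟪(y i : EuclideanSpace ℝ (Fin (n + 1))), (y j : EuclideanSpace ℝ (Fin (n + 1)))⟫ by ring]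
      rw [Real.exp_add]
      ring
    calc (0:ℝ) ≤ Real.exp (-(γ * Real.pi / 2)) * ∑ i, ∑ j, c i * c j *
          Real.exp (γ * Real.arcsin ⟪(y i : EuclideanSpace ℝ (Fin (n + 1))), (y j : EuclideanSpace ℝ (Fin (n + 1)))⟫) :=
            mul_nonneg (Real.exp_pos _).le hQ
      _ = ∑ i, ∑ j, c i * c j *
          Real.exp (-γ * Real.arccos ⟪(y i : EuclideanSpace ℝ (Fin (n + 1))), (y j : EuclideanSpace ℝ (Fin (n + 1)))⟫) := by
            rw [Finset.mul_sum]
            refine Finset.sum_congr rfl fun i _ => ?_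
            rw [Finset.mul_sum]
            refine Finset.sum_congr rfl fun j _ => ?_
            rw [hterm i j]
end

section
/- The exponent 2 is critical for Gaussian geodesic kernels on the sphere: there exists γ > 0 and points y_1, ..., y_m on S^n (n ≥ 1) together with real coefficients c_1, ..., c_m such that Σ_{i,j} c_i c_j exp(-γ d_g(y_i, y_j)²) < 0; that is, exp(-γ d_g(·,·)²) with d_g the geodesic (arc-cosine) distance is not positive semidefinite on S^n. -/
open scoped RealInnerProductSpace

/-- The Gaussian-type kernel built from the squared geodesic distance,
`exp(-γ d_g(y,y')²)` with `d_g(y,y') = arccos⟪y,y'⟫`, is *not* positive semidefinite on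
the sphere `S^n` for `n ≥ 1`: there exist `γ > 0`, finitely many points `y₁,…,y_m` on
`S^n` and real coefficients `c₁,…,c_m` with
`Σ_{i,j} c_i c_j exp(-γ d_g(y_i,y_j)²) < 0`. -/
theorem sphere_gaussian_geodesic_kernel_not_psd (n : ℕ) (hn : 1 ≤ n) :
    ∃ γ : ℝ, 0 < γ ∧
      ∃ (m : ℕ) (y : Fin m → Metric.sphere (0 : EuclideanSpace ℝ (Fin (n + 1))) 1)
        (c : Fin m → ℝ),
        (∑ i, ∑ j, c i * c j *
          Real.exp (-γ * Real.arccos ⟪(y i : EuclideanSpace ℝ (Fin (n + 1))), (y j : EuclideanSpace ℝ (Fin (n + 1)))⟫ ^ 2)) < 0 := by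
  have h1 : (1 : Fin (n+1)).val = 1 := by
    simp [Fin.val_one, Nat.mod_eq_of_lt (by omega : 1 < n + 1)]
  set e0 : EuclideanSpace ℝ (Fin (n+1)) := EuclideanSpace.single 0 1 with he0
  set e1 : EuclideanSpace ℝ (Fin (n+1)) := EuclideanSpace.single 1 1 with he1
  have hne : (0 : Fin (n+1)) ≠ 1 := by
    apply Fin.ne_of_val_ne
    simp only [h1, Fin.val_zero]
    omega
  have hm0 : e0 ∈ Metric.sphere (0 : EuclideanSpace ℝ (Fin (n + 1))) 1 := by
    simp [he0, mem_sphere_zero_iff_norm, EuclideanSpace.norm_single]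
  have hm1 : e1 ∈ Metric.sphere (0 : EuclideanSpace ℝ (Fin (n + 1))) 1 := by
    simp [he1, mem_sphere_zero_iff_norm, EuclideanSpace.norm_single]
  have hm0' : -e0 ∈ Metric.sphere (0 : EuclideanSpace ℝ (Fin (n + 1))) 1 := by
    simpa [mem_sphere_zero_iff_norm, norm_neg] using hm0
  have hm1' : -e1 ∈ Metric.sphere (0 : EuclideanSpace ℝ (Fin (n + 1))) 1 := by
    simpa [mem_sphere_zero_iff_norm, norm_neg] using hm1
  refine ⟨1/100, by norm_num, 4, ![⟨e0, hm0⟩, ⟨-e0, hm0'⟩, ⟨e1, hm1⟩, ⟨-e1, hm1'⟩],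
    ![1, 1, -1, -1], ?_⟩
  have i00 : ⟪e0, e0⟫ = (1:ℝ) := by
    simp [he0, EuclideanSpace.inner_single_left, EuclideanSpace.single_apply]
  have i11 : ⟪e1, e1⟫ = (1:ℝ) := by
    simp [he1, EuclideanSpace.inner_single_left, EuclideanSpace.single_apply]
  have i01 : ⟪e0, e1⟫ = (0:ℝ) := by
    simp [he0, he1, EuclideanSpace.inner_single_left, EuclideanSpace.single_apply, hne.symm]
  have i10 : ⟪e1, e0⟫ = (0:ℝ) := by
    simp [he0, he1, EuclideanSpace.inner_single_left, EuclideanSpace.single_apply, hne.symm]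
  simp only [Fin.sum_univ_four, Matrix.cons_val_zero, Matrix.cons_val_one, Matrix.head_cons,
    Matrix.cons_val_two, Matrix.tail_cons, Matrix.cons_val_three,
    inner_neg_neg, inner_neg_left, inner_neg_right, i00, i11, i01, i10,
    inner_neg_neg, neg_zero, neg_neg, Real.exp_zero,
    Real.arccos_one, Real.arccos_neg_one, Real.arccos_zero]
  set b : ℝ := Real.exp (-(1/100) * (Real.pi/2)^2) with hb
  have hbpow : Real.exp (-(1/100) * Real.pi^2) = b^4 := by
    rw [hb, ← Real.exp_nat_mul]
    ring_nf
  have hblt : b < 1 := by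
    rw [hb, Real.exp_lt_one_iff]
    nlinarith [Real.pi_pos]
  have hbge : (0.97 : ℝ) ≤ b := by
    have h := Real.add_one_le_exp (-(1/100) * (Real.pi/2)^2)
    have hpi : Real.pi < 3.15 := by
      have := Real.pi_lt_d2
      linarith
    nlinarith [Real.pi_pos]
  have hbpos : 0 < b := Real.exp_pos _
  rw [hbpow]
  ring_nf
  have key : 0 < (1 - b) * (b + b^2 + b^3 - 1) :=
    mul_pos (by linarith) (by nlinarith)
  nlinarith [key, Real.exp_zero]
end

section
/- Ensemble averaging achieves exhaustiveness under positivity and continuity: let (Ω_Y, d) be a metric space, P_Y a strictly positive Borel measure on Ω_Y (every nonempty open set has positive measure), and y ↦ M_0(y) a continuous map into the positive semidefinite p×p matrices with span{span(M_0(y)) : y ∈ Ω_Y} = S and ‖M_0(y)‖ ≤ G(y) integrable. Then the matrix M = ∫ M_0(y) dP_Y(y) satisfies span(M) = S. -/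
open MeasureTheory Matrix RealInnerProductSpace

attribute [local instance] Matrix.normedAddCommGroup Matrix.normedSpace

/-- For a symmetric operator on a finite-dimensional real inner product space,
the range is the orthogonal complement of the kernel. -/
theorem StatementAux.symm_range_eq_orth_ker {E : Type*} [NormedAddCommGroup E]
    [InnerProductSpace ℝ E] [FiniteDimensional ℝ E]
    (T : E →ₗ[ℝ] E) (hT : ∀ x y, ⟪T x, y⟫ = ⟪x, T y⟫) :
    LinearMap.range T = (LinearMap.ker T)ᗮ := by
  have h1 : (LinearMap.range T)ᗮ = LinearMap.ker T := by
    ext x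
    simp only [Submodule.mem_orthogonal, LinearMap.mem_range, LinearMap.mem_ker,
      forall_exists_index]
    constructor
    · intro h
      have := h (T (T x)) (T x) rfl
      rw [hT] at this
      exact inner_self_eq_zero.mp this
    · rintro h u v rfl
      rw [hT, h, inner_zero_right]
  rw [← h1, Submodule.orthogonal_orthogonal]

/-- The identity linear equivalence between `Fin p → ℝ` and Euclidean space. -/
noncomputable def StatementAux.eEquiv (p : ℕ) : (Fin p → ℝ) ≃ₗ[ℝ] EuclideanSpace ℝ (Fin p) :=
  (WithLp.linearEquiv 2 ℝ (Fin p → ℝ)).symm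

/-- The operator on Euclidean space induced by a matrix. -/
noncomputable def StatementAux.TOp {p : ℕ} (A : Matrix (Fin p) (Fin p) ℝ) :
    EuclideanSpace ℝ (Fin p) →ₗ[ℝ] EuclideanSpace ℝ (Fin p) :=
  (StatementAux.eEquiv p).toLinearMap ∘ₗ A.mulVecLin ∘ₗ (StatementAux.eEquiv p).symm.toLinearMap

theorem StatementAux.range_TOp {p : ℕ} (A : Matrix (Fin p) (Fin p) ℝ) :
    LinearMap.range (StatementAux.TOp A)
      = Submodule.map (StatementAux.eEquiv p).toLinearMap (LinearMap.range A.mulVecLin) := by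
  rw [StatementAux.TOp, LinearMap.range_comp, LinearMap.range_comp, LinearEquiv.range,
    Submodule.map_top]

theorem StatementAux.ker_TOp {p : ℕ} (A : Matrix (Fin p) (Fin p) ℝ) :
    LinearMap.ker (StatementAux.TOp A)
      = Submodule.map (StatementAux.eEquiv p).toLinearMap (LinearMap.ker A.mulVecLin) := by
  ext x
  simp only [StatementAux.TOp, LinearMap.mem_ker, LinearMap.coe_comp, Function.comp_apply,
    LinearEquiv.coe_coe, EmbeddingLike.map_eq_zero_iff, Submodule.mem_map]
  constructor
  · intro h
    exact ⟨(StatementAux.eEquiv p).symm x, h, by simp⟩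
  · rintro ⟨v, hv, rfl⟩
    simpa using hv

theorem StatementAux.TOp_symm {p : ℕ} {A : Matrix (Fin p) (Fin p) ℝ} (hA : Aᵀ = A)
    (x y : EuclideanSpace ℝ (Fin p)) :
    ⟪StatementAux.TOp A x, y⟫ = ⟪x, StatementAux.TOp A y⟫ := by
  have key : ∀ (u w : Fin p → ℝ), (A *ᵥ u) ⬝ᵥ w = u ⬝ᵥ (A *ᵥ w) := fun u w => by
    rw [dotProduct_mulVec, ← mulVec_transpose, hA, dotProduct_comm]
  simp only [PiLp.inner_apply, RCLike.inner_apply, conj_trivial]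
  have h := key ((StatementAux.eEquiv p).symm x) y
  rw [dotProduct_comm, eq_comm, dotProduct_comm] at h
  exact h.symm

/-- For a symmetric matrix, the kernel of the induced Euclidean operator is the orthogonal
complement of its range. -/
theorem StatementAux.ker_TOp_eq_orth {p : ℕ} {A : Matrix (Fin p) (Fin p) ℝ} (hA : Aᵀ = A) :
    LinearMap.ker (StatementAux.TOp A) = (LinearMap.range (StatementAux.TOp A))ᗮ := by
  rw [StatementAux.symm_range_eq_orth_ker _ (StatementAux.TOp_symm hA),
    Submodule.orthogonal_orthogonal]

/-- ensemble averaging achieves exhaustiveness; Theorem 2, part 2.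
Let `(Ω_Y, d)` be a metric space, `P_Y` a strictly positive Borel probability measure on
`Ω_Y` (every nonempty open set has positive measure), and `y ↦ M₀ y` a continuous map
into the positive semidefinite `p × p` matrices such that the span of all the column
spaces `span(M₀ y)` equals `S`, with `‖M₀ y‖ ≤ G y` for an integrable `G`. Then the
column space of `M = ∫ M₀(y) dP_Y(y)` equals `S`. -/
theorem ensemble_average_exhaustive {p : ℕ} {ΩY : Type*}
    [MetricSpace ΩY] [MeasurableSpace ΩY] [BorelSpace ΩY]
    (PY : Measure ΩY) [IsProbabilityMeasure PY] [PY.IsOpenPosMeasure]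
    (S : Submodule ℝ (Fin p → ℝ))
    (M₀ : ΩY → Matrix (Fin p) (Fin p) ℝ)
    (hcont : Continuous M₀)
    (hpsd : ∀ y, (M₀ y).PosSemidef)
    (hspan : (⨆ y : ΩY, LinearMap.range (M₀ y).mulVecLin) = S)
    (G : ΩY → ℝ) (hG : Integrable G PY)
    (hbound : ∀ y, ‖M₀ y‖ ≤ G y) :
    LinearMap.range (∫ y, M₀ y ∂PY).mulVecLin = S := by
  classical
  set M : Matrix (Fin p) (Fin p) ℝ := ∫ y, M₀ y ∂PY with hM
  have hMint : @Integrable (Matrix (Fin p) (Fin p) ℝ) _ SeminormedAddGroup.toContinuousENorm ΩY _ M₀ PY := by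
    have hsm : AEStronglyMeasurable (fun y => (M₀ y : Fin p → Fin p → ℝ)) PY :=
      Continuous.aestronglyMeasurable (β := Fin p → Fin p → ℝ) hcont
    exact Integrable.mono' hG hsm (Filter.Eventually.of_forall hbound)
  have hsymm₀ : ∀ y, (M₀ y)ᵀ = M₀ y := fun y => by
    simpa [Matrix.IsHermitian] using (hpsd y).1
  -- M is symmetric
  have hMsymm : Mᵀ = M := by
    set L : Matrix (Fin p) (Fin p) ℝ →L[ℝ] Matrix (Fin p) (Fin p) ℝ :=
      LinearMap.toContinuousLinearMap
        { toFun := fun A => Aᵀ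
          map_add' := fun A B => Matrix.transpose_add A B
          map_smul' := fun c A => Matrix.transpose_smul c A } with hLdef
    have hL : ∀ A, L A = Aᵀ := fun A => rfl
    have h := ContinuousLinearMap.integral_comp_comm L hMint
    calc Mᵀ = L M := (hL M).symm
    _ = ∫ y, L (M₀ y) ∂PY := h.symm
    _ = ∫ y, M₀ y ∂PY := by
        congr 1; funext y; rw [hL, hsymm₀]
    _ = M := rfl
  -- mulVec commutes with the integral
  have hMv : ∀ v : Fin p → ℝ, M *ᵥ v = ∫ y, (M₀ y) *ᵥ v ∂PY := by
    intro v
    set L : Matrix (Fin p) (Fin p) ℝ →L[ℝ] (Fin p → ℝ) :=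
      LinearMap.toContinuousLinearMap
        { toFun := fun A => A *ᵥ v
          map_add' := fun A B => Matrix.add_mulVec A B v
          map_smul' := fun c A => Matrix.smul_mulVec c A v } with hLdef
    have hL : ∀ A, L A = A *ᵥ v := fun A => rfl
    have h := (ContinuousLinearMap.integral_comp_comm L hMint).symm
    exact h
  -- kernel of M equals the intersection of the kernels
  have hker : ∀ v : Fin p → ℝ, M *ᵥ v = 0 ↔ ∀ y, (M₀ y) *ᵥ v = 0 := by
    intro v
    constructor
    · intro hv y
      set q : Matrix (Fin p) (Fin p) ℝ →L[ℝ] ℝ :=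
        LinearMap.toContinuousLinearMap
          { toFun := fun A => v ⬝ᵥ (A *ᵥ v)
            map_add' := fun A B => by simp [Matrix.add_mulVec, dotProduct_add]
            map_smul' := fun c A => by simp [Matrix.smul_mulVec, dotProduct_smul] } with hq
      have hq' : ∀ A, q A = v ⬝ᵥ (A *ᵥ v) := fun A => rfl
      set f : ΩY → ℝ := fun y => v ⬝ᵥ ((M₀ y) *ᵥ v) with hf
      have hfc : Continuous f := by
        have := q.continuous.comp hcont
        exact this
      have hf0 : ∀ y, 0 ≤ f y := fun y => by simpa using (hpsd y).dotProduct_mulVec_nonneg v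
      have hfint : Integrable f PY := by
        have := q.integrable_comp hMint
        exact this
      have hint0 : ∫ y, f y ∂PY = 0 := by
        have := ContinuousLinearMap.integral_comp_comm q hMint
        have h4 : ∫ y, f y ∂PY = v ⬝ᵥ (M *ᵥ v) := this
        rw [h4, hv, dotProduct_zero]
      have hae : f =ᵐ[PY] 0 :=
        (integral_eq_zero_iff_of_nonneg hf0 hfint).mp hint0
      have hfeq : f = 0 := (hfc.ae_eq_iff_eq PY continuous_const).mp hae
      have hv0 : v ⬝ᵥ ((M₀ y) *ᵥ v) = 0 := by
        have := congrFun hfeq y; simpa [hf] using this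
      exact ((hpsd y).dotProduct_mulVec_zero_iff v).mp (by simpa using hv0)
    · intro h
      rw [hMv v]
      simp [h]
  -- kernels as submodules
  have hkermod : LinearMap.ker M.mulVecLin = ⨅ y, LinearMap.ker (M₀ y).mulVecLin := by
    ext v
    simp only [LinearMap.mem_ker, mulVecLin_apply, Submodule.mem_iInf]
    exact hker v
  -- transfer to Euclidean space
  set e := StatementAux.eEquiv p with he
  have hMsymmT := StatementAux.ker_TOp_eq_orth hMsymm
  have hmap : Submodule.map (e : (Fin p → ℝ) →ₗ[ℝ] EuclideanSpace ℝ (Fin p)) (LinearMap.range M.mulVecLin) = Submodule.map (e : (Fin p → ℝ) →ₗ[ℝ] EuclideanSpace ℝ (Fin p)) S := by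
    rw [← StatementAux.range_TOp,
      StatementAux.symm_range_eq_orth_ker _ (StatementAux.TOp_symm hMsymm),
      StatementAux.ker_TOp, hkermod]
    have hmapinf : Submodule.map (e : (Fin p → ℝ) →ₗ[ℝ] EuclideanSpace ℝ (Fin p)) (⨅ y, LinearMap.ker (M₀ y).mulVecLin)
        = ⨅ y, Submodule.map (e : (Fin p → ℝ) →ₗ[ℝ] EuclideanSpace ℝ (Fin p)) (LinearMap.ker (M₀ y).mulVecLin) :=
      (Submodule.orderIsoMapComap e).map_iInf _
    rw [hmapinf]
    have hstep : ∀ y, Submodule.map (e : (Fin p → ℝ) →ₗ[ℝ] EuclideanSpace ℝ (Fin p)) (LinearMap.ker (M₀ y).mulVecLin)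
        = (LinearMap.range (StatementAux.TOp (M₀ y)))ᗮ := by
      intro y
      rw [← StatementAux.ker_TOp, StatementAux.ker_TOp_eq_orth (hsymm₀ y)]
    simp_rw [hstep]
    rw [Submodule.iInf_orthogonal, Submodule.orthogonal_orthogonal]
    have h2 : Submodule.map (e : (Fin p → ℝ) →ₗ[ℝ] EuclideanSpace ℝ (Fin p)) (⨆ y, LinearMap.range (M₀ y).mulVecLin)
        = ⨆ y, Submodule.map (e : (Fin p → ℝ) →ₗ[ℝ] EuclideanSpace ℝ (Fin p)) (LinearMap.range (M₀ y).mulVecLin) :=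
      (Submodule.orderIsoMapComap e).map_iSup _
    have this : (⨆ y, LinearMap.range (StatementAux.TOp (M₀ y)))
        = Submodule.map (e : (Fin p → ℝ) →ₗ[ℝ] EuclideanSpace ℝ (Fin p)) (⨆ y, LinearMap.range (M₀ y).mulVecLin) := by
      rw [h2]
      simp_rw [StatementAux.range_TOp]
      rfl
    rw [this, hspan]
  exact Submodule.map_injective_of_injective e.injective hmap
end
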